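/- arXiv:1007.1214 — 2 statements merged into one kernel-verified Lean document; each statement's English description precedes it below -/
import Mathlib

section
/- For double edges B, B' for the same entry (i,j) with no edge in common, P(M(B') | M(B)) − P(M(B')) summed over all such B' equals (r_i−2)^{\underline{2}}(c_j−2)^{\underline{2}}/(2(N−2)^{\underline{2}}) − r_i^{\underline{2}} c_j^{\underline{2}}/(2 N^{\underline{2}}), and this quantity is ≤ 0. -/
open Finset

/-- A double edge for entry `(i,j)`. -/
def IsDoubleEdge {N m n : ℕ} (rowOf : Fin N → Fin m) (colOf : Fin N → Fin n)
    (i : Fin m) (j : Fin n) (B : Finset (Fin N × Fin N)) : Prop :=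
  B.card = 2 ∧ (∀ p ∈ B, rowOf p.1 = i ∧ colOf p.2 = j) ∧
    ∀ p ∈ B, ∀ q ∈ B, p ≠ q → p.1 ≠ q.1 ∧ p.2 ≠ q.2

instance {N m n : ℕ} (rowOf : Fin N → Fin m) (colOf : Fin N → Fin n)
    (i : Fin m) (j : Fin n) : DecidablePred (IsDoubleEdge rowOf colOf i j) := fun _ =>
  by unfold IsDoubleEdge; infer_instance

/-- `M(B)`: all edges of `B` are matched by `σ`. -/
def Matched {N : ℕ} (σ : Equiv.Perm (Fin N)) (B : Finset (Fin N × Fin N)) : Prop :=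
  ∀ p ∈ B, σ p.1 = p.2

instance {N : ℕ} (σ : Equiv.Perm (Fin N)) (B : Finset (Fin N × Fin N)) :
    Decidable (Matched σ B) := by unfold Matched; infer_instance

lemma exists_matched_perm {N : ℕ} (B : Finset (Fin N × Fin N))
    (h1 : ∀ p ∈ B, ∀ q ∈ B, p.1 = q.1 → p = q)
    (h2 : ∀ p ∈ B, ∀ q ∈ B, p.2 = q.2 → p = q) :
    ∃ τ : Equiv.Perm (Fin N), Matched τ B := by
  classical
  set S := B.image Prod.fst with hS
  set T := B.image Prod.snd with hT
  have hexS : ∀ a : Fin N, a ∈ S → ∃! p, p ∈ B ∧ p.1 = a := by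
    intro a ha
    obtain ⟨p, hp, hpa⟩ := Finset.mem_image.1 ha
    exact ⟨p, ⟨hp, hpa⟩, fun q hq => h1 q hq.1 p hp (hpa ▸ hq.2)⟩
  have hexT : ∀ b : Fin N, b ∈ T → ∃! p, p ∈ B ∧ p.2 = b := by
    intro b hb
    obtain ⟨p, hp, hpb⟩ := Finset.mem_image.1 hb
    exact ⟨p, ⟨hp, hpb⟩, fun q hq => h2 q hq.1 p hp (hpb ▸ hq.2)⟩
  have keyS : ∀ (a : Fin N) (ha : a ∈ S), ∀ p ∈ B, p.1 = a →
      B.choose _ (hexS a ha) = p := fun a ha p hp hpa =>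
    h1 _ (B.choose_mem _ _) p hp (by rw [B.choose_property _ (hexS a ha), hpa])
  have keyT : ∀ (b : Fin N) (hb : b ∈ T), ∀ p ∈ B, p.2 = b →
      B.choose _ (hexT b hb) = p := fun b hb p hp hpb =>
    h2 _ (B.choose_mem _ _) p hp (by rw [B.choose_property _ (hexT b hb), hpb])
  obtain ⟨e, he⟩ : ∃ e : {x : Fin N // x ∈ S} ≃ {y : Fin N // y ∈ T},
      ∀ p (hp : p ∈ B), (e ⟨p.1, Finset.mem_image_of_mem _ hp⟩ : Fin N) = p.2 := by
    refine ⟨⟨fun a => ⟨(B.choose _ (hexS a.1 a.2)).2,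
        by exact Finset.mem_image_of_mem Prod.snd (B.choose_mem _ (hexS a.1 a.2))⟩,
      fun b => ⟨(B.choose _ (hexT b.1 b.2)).1,
        by exact Finset.mem_image_of_mem Prod.fst (B.choose_mem _ (hexT b.1 b.2))⟩, ?_, ?_⟩, ?_⟩
    · intro a
      apply Subtype.ext
      simp only
      rw [keyT _ (Finset.mem_image_of_mem Prod.snd (B.choose_mem _ (hexS a.1 a.2))) _ (B.choose_mem _ (hexS a.1 a.2)) rfl]
      exact B.choose_property _ (hexS a.1 a.2)
    · intro b
      apply Subtype.ext
      simp only
      rw [keyS _ (Finset.mem_image_of_mem Prod.fst (B.choose_mem _ (hexT b.1 b.2))) _ (B.choose_mem _ (hexT b.1 b.2)) rfl]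
      exact B.choose_property _ (hexT b.1 b.2)
    · intro p hp
      exact congrArg Prod.snd (keyS _ (Finset.mem_image_of_mem Prod.fst hp) _ hp rfl)
  have hST : Fintype.card {x : Fin N // x ∈ S} = Fintype.card {y : Fin N // y ∈ T} :=
    Fintype.card_congr e
  have hcard : Fintype.card {x : Fin N // ¬ x ∈ S} = Fintype.card {x : Fin N // ¬ x ∈ T} := by
    rw [Fintype.card_subtype_compl, Fintype.card_subtype_compl, hST]
  have f := Fintype.equivOfCardEq hcard
  refine ⟨Equiv.subtypeCongr e f, ?_⟩
  intro p hp
  have hmem : p.1 ∈ S := Finset.mem_image_of_mem _ hp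
  have : Equiv.subtypeCongr e f p.1 = (e ⟨p.1, hmem⟩ : Fin N) := by
    simp only [Equiv.subtypeCongr, Equiv.trans_apply,
      Equiv.sumCompl_symm_apply_of_pos hmem, Equiv.sumCongr_apply, Sum.map_inl,
      Equiv.sumCompl_apply_inl]
  rw [this, he p hp]

lemma card_matched {N : ℕ} (B : Finset (Fin N × Fin N))
    (h1 : ∀ p ∈ B, ∀ q ∈ B, p.1 = q.1 → p = q)
    (h2 : ∀ p ∈ B, ∀ q ∈ B, p.2 = q.2 → p = q) :
    Fintype.card {σ : Equiv.Perm (Fin N) // Matched σ B} = Nat.factorial (N - B.card) := by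
  classical
  obtain ⟨τ, hτ⟩ := exists_matched_perm B h1 h2
  set S := B.image Prod.fst with hS
  have hScard : S.card = B.card := Finset.card_image_of_injOn fun p hp q hq h => h1 p hp q hq h
  -- Matched σ B ↔ ∀ a ∈ S, σ a = τ a
  have hiff : ∀ σ : Equiv.Perm (Fin N), Matched σ B ↔ ∀ a ∈ S, σ a = τ a := by
    intro σ
    constructor
    · intro h a ha
      obtain ⟨p, hp, hpa⟩ := Finset.mem_image.1 ha
      rw [← hpa, h p hp, hτ p hp]
    · intro h p hp
      rw [h p.1 (Finset.mem_image_of_mem _ hp), hτ p hp]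
  have E1 : {σ : Equiv.Perm (Fin N) // Matched σ B} ≃
      {ρ : Equiv.Perm (Fin N) // ∀ a, ¬ (¬ a ∈ S) → ρ a = a} := by
    refine ⟨fun σ => ⟨τ⁻¹ * σ.1, ?_⟩, fun ρ => ⟨τ * ρ.1, ?_⟩, ?_, ?_⟩
    · intro a ha
      rw [not_not] at ha
      simp [Equiv.Perm.mul_apply, (hiff σ.1).1 σ.2 a ha]
    · rw [hiff]
      intro a ha
      have := ρ.2 a (not_not_intro ha)
      simp [Equiv.Perm.mul_apply, this]
    · intro σ; ext1; simp [mul_assoc]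
    · intro ρ; ext1; simp [← mul_assoc]
  rw [Fintype.card_congr E1,
    ← Fintype.card_congr (Equiv.Perm.subtypeEquivSubtypePerm (fun x => ¬ x ∈ S)),
    Fintype.card_perm, Fintype.card_subtype_compl]
  simp only [Fintype.card_fin, Fintype.card_coe, hScard]

lemma card_doubleEdges {N : ℕ} (R C : Finset (Fin N))
    (D : Finset (Finset (Fin N × Fin N)))
    (hD : ∀ B', B' ∈ D ↔ (B'.card = 2 ∧ (∀ p ∈ B', p.1 ∈ R ∧ p.2 ∈ C) ∧
      ∀ p ∈ B', ∀ q ∈ B', p ≠ q → p.1 ≠ q.1 ∧ p.2 ≠ q.2)) :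
    D.card * 2 = (R.card * (R.card - 1)) * (C.card * (C.card - 1)) := by
  classical
  set P := R.offDiag ×ˢ C.offDiag with hP
  set f : (Fin N × Fin N) × (Fin N × Fin N) → Finset (Fin N × Fin N) :=
    fun x => {(x.1.1, x.2.1), (x.1.2, x.2.2)} with hf
  have hmemP : ∀ x : (Fin N × Fin N) × (Fin N × Fin N), x ∈ P ↔
      (x.1.1 ∈ R ∧ x.1.2 ∈ R ∧ x.1.1 ≠ x.1.2) ∧ (x.2.1 ∈ C ∧ x.2.2 ∈ C ∧ x.2.1 ≠ x.2.2) := by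
    intro x
    rw [hP, Finset.mem_product, Finset.mem_offDiag, Finset.mem_offDiag]
  have hmap : ∀ x ∈ P, f x ∈ D := by
    intro x hx
    rw [hmemP] at hx
    obtain ⟨⟨ha, ha', haa⟩, ⟨hb, hb', hbb⟩⟩ := hx
    have hne : (x.1.1, x.2.1) ≠ (x.1.2, x.2.2) := by
      simp only [ne_eq, Prod.mk.injEq, not_and]
      intro h; exact absurd h haa
    rw [hD]
    refine ⟨Finset.card_pair hne, ?_, ?_⟩
    · intro p hp
      rcases Finset.mem_insert.1 hp with h | h
      · rw [h]; exact ⟨ha, hb⟩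
      · rw [Finset.mem_singleton.1 h]; exact ⟨ha', hb'⟩
    · intro p hp q hq hpq
      rcases Finset.mem_insert.1 hp with h | h <;>
        rcases Finset.mem_insert.1 hq with h' | h'
      · exact absurd (h.trans h'.symm) hpq
      · rw [h, Finset.mem_singleton.1 h']; exact ⟨haa, hbb⟩
      · rw [Finset.mem_singleton.1 h, h']; exact ⟨haa.symm, hbb.symm⟩
      · exact absurd ((Finset.mem_singleton.1 h).trans (Finset.mem_singleton.1 h').symm) hpq
  have hfib : ∀ B' ∈ D, (P.filter (fun x => f x = B')).card = 2 := by
    intro B' hB'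
    rw [hD] at hB'
    obtain ⟨hcard2, hRC, hdist⟩ := hB'
    obtain ⟨p, q, hpq, rfl⟩ := Finset.card_eq_two.1 hcard2
    have hp : p ∈ ({p, q} : Finset (Fin N × Fin N)) := Finset.mem_insert_self _ _
    have hq : q ∈ ({p, q} : Finset (Fin N × Fin N)) :=
      Finset.mem_insert_of_mem (Finset.mem_singleton_self _)
    obtain ⟨hp1, hp2⟩ := hRC p hp
    obtain ⟨hq1, hq2⟩ := hRC q hq
    obtain ⟨h1ne, h2ne⟩ := hdist p hp q hq hpq
    have key : P.filter (fun x => f x = {p, q}) =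
        {((p.1, q.1), (p.2, q.2)), ((q.1, p.1), (q.2, p.2))} := by
      ext x
      simp only [Finset.mem_filter, Finset.mem_insert, Finset.mem_singleton]
      constructor
      · rintro ⟨hxP, hfx⟩
        rw [hmemP] at hxP
        obtain ⟨⟨-, -, haa⟩, ⟨-, -, hbb⟩⟩ := hxP
        have e1 : (x.1.1, x.2.1) ∈ ({p, q} : Finset (Fin N × Fin N)) := by
          rw [← hfx]; exact Finset.mem_insert_self _ _
        have e2 : (x.1.2, x.2.2) ∈ ({p, q} : Finset (Fin N × Fin N)) := by
          rw [← hfx]; exact Finset.mem_insert_of_mem (Finset.mem_singleton_self _)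
        rw [Finset.mem_insert, Finset.mem_singleton] at e1 e2
        rcases e1 with e1 | e1 <;> rcases e2 with e2 | e2
        · exact absurd (congrArg Prod.fst (e1.trans e2.symm)) haa
        · left
          have a1 := congrArg Prod.fst e1
          have a2 := congrArg Prod.snd e1
          have b1 := congrArg Prod.fst e2
          have b2 := congrArg Prod.snd e2
          simp only at a1 a2 b1 b2
          rw [← a1, ← a2, ← b1, ← b2]
        · right
          have a1 := congrArg Prod.fst e1
          have a2 := congrArg Prod.snd e1
          have b1 := congrArg Prod.fst e2
          have b2 := congrArg Prod.snd e2
          simp only at a1 a2 b1 b2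
          rw [← a1, ← a2, ← b1, ← b2]
        · exact absurd (congrArg Prod.fst (e1.trans e2.symm)) haa
      · rintro (rfl | rfl)
        · refine ⟨(hmemP _).2 ⟨⟨hp1, hq1, h1ne⟩, hp2, hq2, h2ne⟩, ?_⟩
          show ({(p.1, p.2), (q.1, q.2)} : Finset (Fin N × Fin N)) = {p, q}
          simp
        · refine ⟨(hmemP _).2 ⟨⟨hq1, hp1, h1ne.symm⟩, hq2, hp2, h2ne.symm⟩, ?_⟩
          show ({(q.1, q.2), (p.1, p.2)} : Finset (Fin N × Fin N)) = {p, q}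
          rw [Finset.pair_comm]
    rw [key]
    refine Finset.card_pair fun h => h1ne (congrArg (fun y => y.1.1) h)
  have hPcard : P.card = D.card * 2 := by
    rw [Finset.card_eq_sum_card_fiberwise hmap, Finset.sum_congr rfl hfib,
      Finset.sum_const, smul_eq_mul]
  have hoff : ∀ s : Finset (Fin N), s.offDiag.card = s.card * (s.card - 1) := by
    intro s
    rw [Finset.offDiag_card]
    rw [Nat.mul_sub, mul_one]
  rw [← hPcard, hP, Finset.card_product, hoff, hoff]

lemma ineq_helper (x y z : ℝ) (hx4 : 4 ≤ x) (hy4 : 4 ≤ y) (hxz : x ≤ z) (hyz : y ≤ z) :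
    (x - 2) * (x - 3) * ((y - 2) * (y - 3)) * (2 * (z * (z - 1)))
      ≤ x * (x - 1) * (y * (y - 1)) * (2 * ((z - 2) * (z - 3))) := by
  have hz4 : (4:ℝ) ≤ z := le_trans hx4 hxz
  have l1 : (x - 2) * (x - 3) * (z * (z - 1)) ≤ x * (x - 1) * ((z - 2) * (z - 3)) := by
    nlinarith [mul_nonneg (sub_nonneg.2 hxz)
      (show (0:ℝ) ≤ (2*z - 3) * x - 3 * (z - 1) by nlinarith)]
  have hy23 : (0:ℝ) ≤ (y - 2) * (y - 3) := by nlinarith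
  have l2 : (y - 2) * (y - 3) ≤ y * (y - 1) := by nlinarith
  have hxz23 : (0:ℝ) ≤ x * (x - 1) * ((z - 2) * (z - 3)) :=
    mul_nonneg (by nlinarith) (by nlinarith)
  have T : ((x - 2) * (x - 3) * (z * (z - 1))) * ((y - 2) * (y - 3))
      ≤ (x * (x - 1) * ((z - 2) * (z - 3))) * (y * (y - 1)) :=
    le_trans (mul_le_mul_of_nonneg_right l1 hy23) (mul_le_mul_of_nonneg_left l2 hxz23)
  nlinarith [T]

lemma alg_helper (a1 a2 f4 d2 dN : ℝ) (hf4 : 0 < f4) (hd2 : 0 < d2) (hdN : 0 < dN) :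
    a1 * (f4 / (f4 * d2)) - a2 * ((f4 * d2) / ((f4 * d2) * dN))
      = (2 * a1) / (2 * d2) - (2 * a2) / (2 * dN) := by
  field_simp

/-- for a fixed double edge `B` for entry `(i,j)`, the sum over double
edges `B'` for `(i,j)` sharing no edge (no token) with `B` of
`P(M(B') | M(B)) − P(M(B'))` equals
`(r_i−2)^{\underline{2}}(c_j−2)^{\underline{2}}/(2(N−2)^{\underline{2}})
  − r_i^{\underline{2}} c_j^{\underline{2}}/(2 N^{\underline{2}})`,
and this quantity is `≤ 0`.  (As in the paper, the unconditional term sums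
`P(M(B'))` over all double edges of the entry `(i,j)`.) -/
theorem sum_condProb_disjoint_double_edges_eq
    (N m n : ℕ) (r : Fin m → ℕ) (c : Fin n → ℕ)
    (hr : ∑ i, r i = N) (hc : ∑ j, c j = N)
    (rowOf : Fin N → Fin m) (colOf : Fin N → Fin n)
    (hrow : ∀ i, (univ.filter (fun t => rowOf t = i)).card = r i)
    (hcol : ∀ j, (univ.filter (fun t => colOf t = j)).card = c j)
    (i : Fin m) (j : Fin n)
    (hri : 2 ≤ r i) (hcj : 2 ≤ c j) (hN : 4 ≤ N)
    (B : Finset (Fin N × Fin N)) (hB : IsDoubleEdge rowOf colOf i j B) :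
    (∑ B' ∈ univ.filter (fun B' : Finset (Fin N × Fin N) =>
          IsDoubleEdge rowOf colOf i j B' ∧
          ∀ p ∈ B', ∀ q ∈ B, p.1 ≠ q.1 ∧ p.2 ≠ q.2),
        (Fintype.card {σ : Equiv.Perm (Fin N) // Matched σ B' ∧ Matched σ B} : ℝ)
          / (Fintype.card {σ : Equiv.Perm (Fin N) // Matched σ B} : ℝ))
      - (∑ B' ∈ univ.filter (fun B' : Finset (Fin N × Fin N) =>
          IsDoubleEdge rowOf colOf i j B'),
        (Fintype.card {σ : Equiv.Perm (Fin N) // Matched σ B'} : ℝ) / Nat.factorial N)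
      = (Nat.descFactorial (r i - 2) 2 * Nat.descFactorial (c j - 2) 2 : ℝ)
          / (2 * Nat.descFactorial (N - 2) 2)
        - (Nat.descFactorial (r i) 2 * Nat.descFactorial (c j) 2 : ℝ)
          / (2 * Nat.descFactorial N 2) ∧
    (Nat.descFactorial (r i - 2) 2 * Nat.descFactorial (c j - 2) 2 : ℝ)
        / (2 * Nat.descFactorial (N - 2) 2)
      - (Nat.descFactorial (r i) 2 * Nat.descFactorial (c j) 2 : ℝ)
        / (2 * Nat.descFactorial N 2) ≤ 0 := by
  classical
  have desc2 : ∀ k : ℕ, Nat.descFactorial k 2 = k * (k - 1) := by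
    intro k
    rw [Nat.descFactorial_succ, Nat.descFactorial_one, mul_comm]
  -- basic facts about B
  obtain ⟨hBcard, hBrc, hBdist⟩ := hB
  have hB1 : ∀ p ∈ B, ∀ q ∈ B, p.1 = q.1 → p = q := by
    intro p hp q hq h
    by_contra hne
    exact (hBdist p hp q hq hne).1 h
  have hB2 : ∀ p ∈ B, ∀ q ∈ B, p.2 = q.2 → p = q := by
    intro p hp q hq h
    by_contra hne
    exact (hBdist p hp q hq hne).2 h
  have cardMB : Fintype.card {σ : Equiv.Perm (Fin N) // Matched σ B}
      = Nat.factorial (N - 2) := by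
    rw [card_matched B hB1 hB2, hBcard]
  -- the two index sets
  set F1 := univ.filter (fun B' : Finset (Fin N × Fin N) =>
      IsDoubleEdge rowOf colOf i j B' ∧
      ∀ p ∈ B', ∀ q ∈ B, p.1 ≠ q.1 ∧ p.2 ≠ q.2) with hF1
  set F2 := univ.filter (fun B' : Finset (Fin N × Fin N) =>
      IsDoubleEdge rowOf colOf i j B') with hF2
  -- counting the numerators
  have stepB : ∀ B' ∈ F2, Fintype.card {σ : Equiv.Perm (Fin N) // Matched σ B'}
      = Nat.factorial (N - 2) := by
    intro B' hB'
    rw [hF2, Finset.mem_filter] at hB'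
    obtain ⟨-, hc2, hcrc, hcdist⟩ := hB'
    rw [card_matched B' (fun p hp q hq h => by
        by_contra hne; exact (hcdist p hp q hq hne).1 h)
      (fun p hp q hq h => by
        by_contra hne; exact (hcdist p hp q hq hne).2 h), hc2]
  have stepA : ∀ B' ∈ F1,
      Fintype.card {σ : Equiv.Perm (Fin N) // Matched σ B' ∧ Matched σ B}
      = Nat.factorial (N - 4) := by
    intro B' hB'
    rw [hF1, Finset.mem_filter] at hB'
    obtain ⟨-, ⟨hc2, hcrc, hcdist⟩, hdisj⟩ := hB'
    have hBB : Disjoint B' B := by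
      rw [Finset.disjoint_left]
      intro p hp hpB
      exact (hdisj p hp p hpB).1 rfl
    have hu1 : ∀ p ∈ B' ∪ B, ∀ q ∈ B' ∪ B, p.1 = q.1 → p = q := by
      intro p hp q hq h
      rcases Finset.mem_union.1 hp with hp | hp <;> rcases Finset.mem_union.1 hq with hq | hq
      · by_contra hne; exact (hcdist p hp q hq hne).1 h
      · exact absurd h (hdisj p hp q hq).1
      · exact absurd h.symm (hdisj q hq p hp).1
      · exact hB1 p hp q hq h
    have hu2 : ∀ p ∈ B' ∪ B, ∀ q ∈ B' ∪ B, p.2 = q.2 → p = q := by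
      intro p hp q hq h
      rcases Finset.mem_union.1 hp with hp | hp <;> rcases Finset.mem_union.1 hq with hq | hq
      · by_contra hne; exact (hcdist p hp q hq hne).2 h
      · exact absurd h (hdisj p hp q hq).2
      · exact absurd h.symm (hdisj q hq p hp).2
      · exact hB2 p hp q hq h
    have hiff : ∀ σ : Equiv.Perm (Fin N),
        (Matched σ B' ∧ Matched σ B) ↔ Matched σ (B' ∪ B) := by
      intro σ
      constructor
      · rintro ⟨h1, h2⟩ p hp
        rcases Finset.mem_union.1 hp with hp | hp
        · exact h1 p hp
        · exact h2 p hp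
      · intro h
        exact ⟨fun p hp => h p (Finset.mem_union_left _ hp),
          fun p hp => h p (Finset.mem_union_right _ hp)⟩
    rw [Fintype.card_congr (Equiv.subtypeEquivRight hiff), card_matched _ hu1 hu2,
      Finset.card_union_of_disjoint hBB, hc2, hBcard]
  -- counting F2
  set R := univ.filter (fun t => rowOf t = i) with hR
  set C := univ.filter (fun t => colOf t = j) with hC
  have hRcard : R.card = r i := hrow i
  have hCcard : C.card = c j := hcol j
  have countF2 : F2.card * 2 = (r i * (r i - 1)) * (c j * (c j - 1)) := by
    rw [← hRcard, ← hCcard]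
    apply card_doubleEdges R C
    intro B'
    rw [hF2, Finset.mem_filter]
    unfold IsDoubleEdge
    constructor
    · rintro ⟨-, h1, h2, h3⟩
      exact ⟨h1, fun p hp => ⟨Finset.mem_filter.2 ⟨Finset.mem_univ _, (h2 p hp).1⟩,
        Finset.mem_filter.2 ⟨Finset.mem_univ _, (h2 p hp).2⟩⟩, h3⟩
    · rintro ⟨h1, h2, h3⟩
      exact ⟨Finset.mem_univ _, h1, fun p hp =>
        ⟨(Finset.mem_filter.1 (h2 p hp).1).2, (Finset.mem_filter.1 (h2 p hp).2).2⟩, h3⟩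
  -- counting F1
  have hBfst : B.image Prod.fst ⊆ R := by
    intro a ha
    obtain ⟨p, hp, rfl⟩ := Finset.mem_image.1 ha
    exact Finset.mem_filter.2 ⟨Finset.mem_univ _, (hBrc p hp).1⟩
  have hBsnd : B.image Prod.snd ⊆ C := by
    intro a ha
    obtain ⟨p, hp, rfl⟩ := Finset.mem_image.1 ha
    exact Finset.mem_filter.2 ⟨Finset.mem_univ _, (hBrc p hp).2⟩
  have hBfcard : (B.image Prod.fst).card = 2 := by
    rw [Finset.card_image_of_injOn fun p hp q hq h => hB1 p hp q hq h, hBcard]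
  have hBscard : (B.image Prod.snd).card = 2 := by
    rw [Finset.card_image_of_injOn fun p hp q hq h => hB2 p hp q hq h, hBcard]
  have hR'card : (R \ B.image Prod.fst).card = r i - 2 := by
    rw [Finset.card_sdiff_of_subset hBfst, hBfcard, hRcard]
  have hC'card : (C \ B.image Prod.snd).card = c j - 2 := by
    rw [Finset.card_sdiff_of_subset hBsnd, hBscard, hCcard]
  have countF1 : F1.card * 2 = ((r i - 2) * (r i - 2 - 1)) * ((c j - 2) * (c j - 2 - 1)) := by
    rw [← hR'card, ← hC'card]
    apply card_doubleEdges (R \ B.image Prod.fst) (C \ B.image Prod.snd)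
    intro B'
    rw [hF1, Finset.mem_filter]
    unfold IsDoubleEdge
    constructor
    · rintro ⟨-, ⟨h1, h2, h3⟩, h4⟩
      refine ⟨h1, fun p hp => ?_, h3⟩
      refine ⟨Finset.mem_sdiff.2 ⟨Finset.mem_filter.2 ⟨Finset.mem_univ _, (h2 p hp).1⟩, ?_⟩,
        Finset.mem_sdiff.2 ⟨Finset.mem_filter.2 ⟨Finset.mem_univ _, (h2 p hp).2⟩, ?_⟩⟩
      · intro hmem
        obtain ⟨q, hq, hq1⟩ := Finset.mem_image.1 hmem
        exact (h4 p hp q hq).1 hq1.symm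
      · intro hmem
        obtain ⟨q, hq, hq2⟩ := Finset.mem_image.1 hmem
        exact (h4 p hp q hq).2 hq2.symm
    · rintro ⟨h1, h2, h3⟩
      refine ⟨Finset.mem_univ _, ⟨h1, fun p hp => ?_, h3⟩, fun p hp q hq => ?_⟩
      · obtain ⟨hpR, hpC⟩ := h2 p hp
        exact ⟨(Finset.mem_filter.1 (Finset.mem_sdiff.1 hpR).1).2,
          (Finset.mem_filter.1 (Finset.mem_sdiff.1 hpC).1).2⟩
      · obtain ⟨hpR, hpC⟩ := h2 p hp
        constructor
        · intro h
          exact (Finset.mem_sdiff.1 hpR).2 (h ▸ Finset.mem_image_of_mem Prod.fst hq)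
        · intro h
          exact (Finset.mem_sdiff.1 hpC).2 (h ▸ Finset.mem_image_of_mem Prod.snd hq)
  -- sums as constants
  have sum1 : (∑ B' ∈ F1,
      (Fintype.card {σ : Equiv.Perm (Fin N) // Matched σ B' ∧ Matched σ B} : ℝ)
        / (Fintype.card {σ : Equiv.Perm (Fin N) // Matched σ B} : ℝ))
      = F1.card * ((Nat.factorial (N - 4) : ℝ) / (Nat.factorial (N - 2) : ℝ)) := by
    rw [Finset.sum_congr rfl (fun B' hB' => by rw [stepA B' hB', cardMB]),
      Finset.sum_const, nsmul_eq_mul]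
  have sum2 : (∑ B' ∈ F2,
      (Fintype.card {σ : Equiv.Perm (Fin N) // Matched σ B'} : ℝ) / (Nat.factorial N : ℝ))
      = F2.card * ((Nat.factorial (N - 2) : ℝ) / (Nat.factorial N : ℝ)) := by
    rw [Finset.sum_congr rfl (fun B' hB' => by rw [stepB B' hB']),
      Finset.sum_const, nsmul_eq_mul]
  -- factorial identities
  have h42 : N - 2 - 2 = N - 4 := by omega
  have e2 : Nat.factorial (N - 2) = Nat.factorial (N - 4) * Nat.descFactorial (N - 2) 2 := by
    rw [← h42]
    exact (Nat.factorial_mul_descFactorial (show 2 ≤ N - 2 by omega)).symm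
  have eN : Nat.factorial N = Nat.factorial (N - 2) * Nat.descFactorial N 2 :=
    (Nat.factorial_mul_descFactorial (show 2 ≤ N by omega)).symm
  -- positivity
  have hd2pos : 0 < Nat.descFactorial (N - 2) 2 := by
    rw [desc2]; apply Nat.mul_pos <;> omega
  have hdNpos : 0 < Nat.descFactorial N 2 := by
    rw [desc2]; apply Nat.mul_pos <;> omega
  have hd2R : (0:ℝ) < (Nat.descFactorial (N - 2) 2 : ℝ) := by exact_mod_cast hd2pos
  have hdNR : (0:ℝ) < (Nat.descFactorial N 2 : ℝ) := by exact_mod_cast hdNpos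
  have hf4R : (0:ℝ) < (Nat.factorial (N - 4) : ℝ) := by
    exact_mod_cast Nat.factorial_pos _
  have hf2R : (0:ℝ) < (Nat.factorial (N - 2) : ℝ) := by
    exact_mod_cast Nat.factorial_pos _
  have hfNR : (0:ℝ) < (Nat.factorial N : ℝ) := by
    exact_mod_cast Nat.factorial_pos _
  have E2 : (Nat.factorial (N - 2) : ℝ)
      = (Nat.factorial (N - 4) : ℝ) * (Nat.descFactorial (N - 2) 2 : ℝ) := by
    exact_mod_cast congrArg (Nat.cast : ℕ → ℝ) e2
  have EN : (Nat.factorial N : ℝ)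
      = (Nat.factorial (N - 2) : ℝ) * (Nat.descFactorial N 2 : ℝ) := by
    exact_mod_cast congrArg (Nat.cast : ℕ → ℝ) eN
  have C1 : (Nat.descFactorial (r i - 2) 2 : ℝ) * (Nat.descFactorial (c j - 2) 2 : ℝ)
      = 2 * (F1.card : ℝ) := by
    have : Nat.descFactorial (r i - 2) 2 * Nat.descFactorial (c j - 2) 2 = 2 * F1.card := by
      rw [desc2, desc2, ← countF1, mul_comm]
    exact_mod_cast this
  have C2 : (Nat.descFactorial (r i) 2 : ℝ) * (Nat.descFactorial (c j) 2 : ℝ)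
      = 2 * (F2.card : ℝ) := by
    have : Nat.descFactorial (r i) 2 * Nat.descFactorial (c j) 2 = 2 * F2.card := by
      rw [desc2, desc2, ← countF2, mul_comm]
    exact_mod_cast this
  constructor
  · rw [sum1, sum2, C1, C2, EN, E2]
    exact alg_helper _ _ _ _ _ hf4R hd2R hdNR
  · -- the inequality
    rw [C1, C2]
    have hriN : r i ≤ N := hr ▸ Finset.single_le_sum (fun _ _ => Nat.zero_le _) (mem_univ i)
    have hcjN : c j ≤ N := hc ▸ Finset.single_le_sum (fun _ _ => Nat.zero_le _) (mem_univ j)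
    rw [sub_nonpos]
    rw [div_le_div_iff₀ (by positivity) (by positivity)]
    -- bound 2*F1.card and 2*F2.card back in terms of descFactorials
    rw [← C1, ← C2]
    clear_value F1 F2
    clear sum1 sum2 stepA stepB countF1 countF2 C1 C2 E2 EN e2 eN cardMB hB1 hB2
      hBdist hBrc hBfst hBsnd hBfcard hBscard hR'card hC'card hRcard hCcard
      hF1 hF2 hR hC F1 F2 R C B hrow hcol hd2R hdNR hf4R hf2R hfNR hBcard
      hd2pos hdNpos h42 rowOf colOf hr hc
    by_cases h3 : r i ≤ 3 ∨ c j ≤ 3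
    · have : (Nat.descFactorial (r i - 2) 2 : ℝ) * (Nat.descFactorial (c j - 2) 2 : ℝ) = 0 := by
        rcases h3 with h3 | h3
        · have h0 : r i - 2 - 1 = 0 := by omega
          have : Nat.descFactorial (r i - 2) 2 = 0 := by rw [desc2, h0, mul_zero]
          rw [this]; simp
        · have h0 : c j - 2 - 1 = 0 := by omega
          have : Nat.descFactorial (c j - 2) 2 = 0 := by rw [desc2, h0, mul_zero]
          rw [this]; simp
      rw [this, zero_mul]
      positivity
    · push_neg at h3
      obtain ⟨hr4, hc4⟩ := h3
      have hrs1 : r i - 2 - 1 = r i - 3 := by omega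
      have hcs1 : c j - 2 - 1 = c j - 3 := by omega
      have hNs1 : N - 2 - 1 = N - 3 := by omega
      rw [desc2, desc2, desc2, desc2, desc2, desc2, hrs1, hcs1, hNs1]
      push_cast [Nat.cast_sub (by omega : 2 ≤ r i), Nat.cast_sub (by omega : 3 ≤ r i),
        Nat.cast_sub (by omega : 2 ≤ c j), Nat.cast_sub (by omega : 3 ≤ c j),
        Nat.cast_sub (by omega : 1 ≤ r i), Nat.cast_sub (by omega : 1 ≤ c j),
        Nat.cast_sub (by omega : 2 ≤ N), Nat.cast_sub (by omega : 3 ≤ N),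
        Nat.cast_sub (by omega : 1 ≤ N)]
      have hx4 : (4:ℝ) ≤ (r i : ℝ) := by exact_mod_cast hr4
      have hy4 : (4:ℝ) ≤ (c j : ℝ) := by exact_mod_cast hc4
      have hxz : (r i : ℝ) ≤ (N : ℝ) := by exact_mod_cast hriN
      have hyz : (c j : ℝ) ≤ (N : ℝ) := by exact_mod_cast hcjN
      nlinarith [ineq_helper (r i : ℝ) (c j : ℝ) (N : ℝ) hx4 hy4 hxz hyz]
end

section
/- If μ(N) = Σ_{(i,j)} r_i^{\underline{2}} c_j^{\underline{2}}/(2 N^{\underline{2}}) satisfies limsup_{N→∞} μ(N) = ∞ (i.e., Σ_{i,j} r_i(r_i−1)c_j(c_j−1) is not O(N^2)), then liminf_{N→∞} P(T ∈ Ω_{r,c}) = 0; that is, the probability that the configuration model outputs a binary table is not bounded away from 0. -/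
open Finset

/-- The probability that the configuration model (with token-to-row map `rowOf N`
and token-to-column map `colOf N`) produces a binary table, for size parameter `N`. -/
noncomputable def probBinary (rowOf colOf : (N : ℕ) → Fin N → ℕ) (N : ℕ) : ℝ :=
  (Fintype.card {σ : Equiv.Perm (Fin N) //
      ∀ i ∈ Finset.range N, ∀ j ∈ Finset.range N,
        (univ.filter (fun t => rowOf N t = i ∧ colOf N (σ t) = j)).card ≤ 1} : ℝ)
    / Nat.factorial N


section Aux
open Equiv


lemma exists_perm_extend {N k : ℕ} (t s : Fin k → Fin N)
    (ht : Function.Injective t) (hs : Function.Injective s) :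
    ∃ τ : Equiv.Perm (Fin N), ∀ m, τ (t m) = s m := by
  classical
  have h1 : Fintype.card {x : Fin N // x ∈ Set.range t} = k := by
    have := Set.card_range_of_injective ht
    rw [Fintype.card_fin] at this
    exact (Fintype.card_congr (Equiv.refl _)).trans this
  have h2 : Fintype.card {x : Fin N // x ∈ Set.range s} = k := by
    have := Set.card_range_of_injective hs
    rw [Fintype.card_fin] at this
    exact (Fintype.card_congr (Equiv.refl _)).trans this
  have hcard : Fintype.card {x : Fin N // ¬ x ∈ Set.range t} =
      Fintype.card {x : Fin N // ¬ x ∈ Set.range s} := by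
    rw [Fintype.card_subtype_compl, Fintype.card_subtype_compl, h1, h2]
  let ec : {x : Fin N // ¬ x ∈ Set.range t} ≃ {x : Fin N // ¬ x ∈ Set.range s} :=
    Fintype.equivOfCardEq hcard
  let eT : Fin k ≃ Set.range t := Equiv.ofInjective t ht
  let eS : Fin k ≃ Set.range s := Equiv.ofInjective s hs
  let τ : Equiv.Perm (Fin N) :=
    ((Equiv.sumCompl (· ∈ Set.range t)).symm.trans
      (Equiv.sumCongr (eT.symm.trans eS) ec)).trans (Equiv.sumCompl (· ∈ Set.range s))
  refine ⟨τ, fun m => ?_⟩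
  have hm : t m ∈ Set.range t := ⟨m, rfl⟩
  simp only [τ, Equiv.trans_apply, Equiv.sumCompl_symm_apply_of_pos hm,
    Equiv.sumCongr_apply, Sum.map_inl, Equiv.sumCompl_apply_inl]
  have h3 : (eT.symm ⟨t m, hm⟩) = m := by
    apply eT.injective; simp only [Equiv.apply_symm_apply]; rfl
  rw [h3]; rfl

lemma card_perm_extend {N k : ℕ} (t s : Fin k → Fin N)
    (ht : Function.Injective t) (hs : Function.Injective s) :
    ((univ : Finset (Equiv.Perm (Fin N))).filter
      (fun σ => ∀ m, σ (t m) = s m)).card = (N - k).factorial := by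
  classical
  obtain ⟨τ, hτ⟩ := exists_perm_extend t s ht hs
  -- bijection with the pointwise stabilizer
  have hbij : ((univ : Finset (Equiv.Perm (Fin N))).filter
      (fun σ => ∀ m, σ (t m) = s m)).card =
      ((univ : Finset (Equiv.Perm (Fin N))).filter
      (fun σ => ∀ m, σ (t m) = t m)).card := by
    refine Finset.card_bij' (fun σ _ => σ.trans τ.symm) (fun σ _ => σ.trans τ) ?_ ?_ ?_ ?_
    · intro σ hσ
      simp only [Finset.mem_filter, Finset.mem_univ, true_and] at hσ ⊢
      intro m; simp [hσ m, ← hτ m]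
    · intro σ hσ
      simp only [Finset.mem_filter, Finset.mem_univ, true_and] at hσ ⊢
      intro m; simp [hσ m, hτ m]
    · intro σ _; ext x; simp
    · intro σ _; ext x; simp
  rw [hbij]
  have hsub : ((univ : Finset (Equiv.Perm (Fin N))).filter
      (fun σ => ∀ m, σ (t m) = t m)).card =
      Fintype.card {σ : Equiv.Perm (Fin N) // ∀ a, ¬ (a ∉ Set.range t) → σ a = a} := by
    rw [Fintype.card_subtype]
    congr 1
    apply Finset.filter_congr
    intro σ _
    constructor
    · intro h a ha
      obtain ⟨m, rfl⟩ := not_not.mp ha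
      exact h m
    · intro h m
      exact h (t m) (not_not.mpr ⟨m, rfl⟩)
  rw [hsub,
    ← Fintype.card_congr (Equiv.Perm.subtypeEquivSubtypePerm (fun a => a ∉ Set.range t)),
    Fintype.card_perm, Fintype.card_subtype_compl]
  congr 2
  · exact Fintype.card_fin N
  · have := Set.card_range_of_injective ht
    rw [Fintype.card_fin] at this
    exact (Fintype.card_congr (Equiv.refl _)).trans this

lemma card_le_extend {N k : ℕ} (t : Fin k → Fin N) (ht : Function.Injective t)
    (s : Fin k → Fin N) :
    ((univ : Finset (Equiv.Perm (Fin N))).filter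
      (fun σ => ∀ m, σ (t m) = s m)).card ≤ (N - k).factorial := by
  classical
  by_cases hs : Function.Injective s
  · exact le_of_eq (card_perm_extend t s ht hs)
  · have : ((univ : Finset (Equiv.Perm (Fin N))).filter
        (fun σ => ∀ m, σ (t m) = s m)) = ∅ := by
      rw [Finset.filter_eq_empty_iff]
      rintro σ - h
      exact hs (fun m m' hmm => ht (σ.injective (by rw [h m, h m', hmm])))
    simp [this]

lemma vec2_inj {N : ℕ} {a b : Fin N} (h : a ≠ b) : Function.Injective ![a, b] := by
  intro i j hij
  fin_cases i <;> fin_cases j <;> simp_all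

lemma vec3_inj {N : ℕ} {a b u : Fin N} (hab : a ≠ b) (hau : a ≠ u) (hbu : b ≠ u) :
    Function.Injective ![a, b, u] := by
  intro i j hij
  fin_cases i <;> fin_cases j <;> simp_all

lemma vec4_inj {N : ℕ} {a b u w : Fin N} (hab : a ≠ b) (hau : a ≠ u) (haw : a ≠ w)
    (hbu : b ≠ u) (hbw : b ≠ w) (huw : u ≠ w) :
    Function.Injective ![a, b, u, w] := by
  intro i j hij
  fin_cases i <;> fin_cases j <;> simp_all

lemma card_pair_eq {N : ℕ} {a b x y : Fin N} (hab : a ≠ b) (hxy : x ≠ y) :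
    ((univ : Finset (Equiv.Perm (Fin N))).filter
      (fun σ => σ a = x ∧ σ b = y)).card = (N - 2).factorial := by
  rw [← card_perm_extend ![a, b] ![x, y] (vec2_inj hab) (vec2_inj hxy)]
  congr 1
  apply Finset.filter_congr
  intro σ _
  simp [Fin.forall_fin_two]

lemma card_triple_le {N : ℕ} {a b u : Fin N} (hab : a ≠ b) (hau : a ≠ u) (hbu : b ≠ u)
    (x y z : Fin N) :
    ((univ : Finset (Equiv.Perm (Fin N))).filter
      (fun σ => σ a = x ∧ σ b = y ∧ σ u = z)).card ≤ (N - 3).factorial := by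
  refine le_trans (le_of_eq ?_) (card_le_extend ![a, b, u] (vec3_inj hab hau hbu) ![x, y, z])
  congr 1
  apply Finset.filter_congr
  intro σ _
  constructor
  · rintro ⟨h1, h2, h3⟩ m; fin_cases m <;> simpa
  · intro h
    exact ⟨h 0, h 1, h 2⟩

lemma card_quad_le {N : ℕ} {a b u w : Fin N} (hab : a ≠ b) (hau : a ≠ u) (haw : a ≠ w)
    (hbu : b ≠ u) (hbw : b ≠ w) (huw : u ≠ w) (x y z v : Fin N) :
    ((univ : Finset (Equiv.Perm (Fin N))).filter
      (fun σ => σ a = x ∧ σ b = y ∧ σ u = z ∧ σ w = v)).card ≤ (N - 4).factorial := by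
  refine le_trans (le_of_eq ?_)
    (card_le_extend ![a, b, u, w] (vec4_inj hab hau haw hbu hbw huw) ![x, y, z, v])
  congr 1
  apply Finset.filter_congr
  intro σ _
  constructor
  · rintro ⟨h1, h2, h3, h4⟩ m; fin_cases m <;> simpa
  · intro h
    exact ⟨h 0, h 1, h 2, h 3⟩

/-- The set of ordered pairs of distinct indices lying in the same class of `f`. -/
def samePairs {N : ℕ} (f : Fin N → ℕ) : Finset (Fin N × Fin N) :=
  (univ ×ˢ univ).filter (fun p => p.1 ≠ p.2 ∧ f p.1 = f p.2)

lemma mem_samePairs {N : ℕ} {f : Fin N → ℕ} {p : Fin N × Fin N} :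
    p ∈ samePairs f ↔ p.1 ≠ p.2 ∧ f p.1 = f p.2 := by
  simp [samePairs]

lemma class_lt {N : ℕ} {f : Fin N → ℕ} {v : ℕ → ℕ}
    (hv : ∀ i, (univ.filter (fun t => f t = i)).card = v i)
    (hsupp : ∀ i, N ≤ i → v i = 0) (t : Fin N) : f t < N := by
  by_contra h
  have h0 : v (f t) = 0 := hsupp _ (le_of_not_gt h)
  have : t ∈ univ.filter (fun t' => f t' = f t) := by simp
  have hpos := Finset.card_pos.mpr ⟨t, this⟩
  rw [hv] at hpos
  omega

lemma samePairs_card {N : ℕ} {f : Fin N → ℕ} {v : ℕ → ℕ}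
    (hv : ∀ i, (univ.filter (fun t => f t = i)).card = v i)
    (hsupp : ∀ i, N ≤ i → v i = 0) :
    (samePairs f).card = ∑ i ∈ Finset.range N, v i * (v i - 1) := by
  classical
  rw [Finset.card_eq_sum_card_fiberwise
    (f := fun p : Fin N × Fin N => p.1) (t := univ) (fun p _ => Finset.mem_univ _)]
  have hfib : ∀ t : Fin N, ((samePairs f).filter (fun p => p.1 = t)).card = v (f t) - 1 := by
    intro t
    have hbij : ((samePairs f).filter (fun p => p.1 = t)).card =
        ((univ.filter (fun t' => f t' = f t)).erase t).card := by
      refine Finset.card_bij' (fun p _ => p.2) (fun t' _ => (t, t')) ?_ ?_ ?_ ?_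
      · intro p hp
        simp only [Finset.mem_filter, mem_samePairs] at hp
        obtain ⟨⟨hne, hf⟩, h1⟩ := hp
        simp only [Finset.mem_erase, Finset.mem_filter, Finset.mem_univ, true_and]
        rw [h1] at hne hf
        exact ⟨Ne.symm hne, hf.symm⟩
      · intro t' ht'
        simp only [Finset.mem_erase, Finset.mem_filter] at ht'
        exact Finset.mem_filter.mpr ⟨mem_samePairs.mpr ⟨Ne.symm ht'.1, ht'.2.2.symm⟩, rfl⟩
      · intro p hp
        simp only [Finset.mem_filter] at hp
        exact Prod.ext hp.2.symm rfl
      · intro t' _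
        rfl
    rw [hbij, Finset.card_erase_of_mem (by simp), hv]
  calc (∑ t : Fin N, ((samePairs f).filter (fun p => p.1 = t)).card)
      = ∑ t : Fin N, (v (f t) - 1) := by
        exact Finset.sum_congr rfl (fun t _ => hfib t)
    _ = ∑ i ∈ Finset.range N, ∑ t ∈ univ.filter (fun t => f t = i), (v (f t) - 1) := by
        rw [Finset.sum_fiberwise_of_maps_to (fun t _ => Finset.mem_range.mpr
          (class_lt hv hsupp t))]
    _ = ∑ i ∈ Finset.range N, v i * (v i - 1) := by
        refine Finset.sum_congr rfl (fun i _ => ?_)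
        have hcong : ∀ t ∈ univ.filter (fun t => f t = i), v (f t) - 1 = v i - 1 :=
          fun t ht => by rw [(Finset.mem_filter.mp ht).2]
        rw [Finset.sum_congr rfl hcong, Finset.sum_const, hv, smul_eq_mul]

lemma coll_card {N : ℕ} (col : Fin N → ℕ) {a b : Fin N} (hab : a ≠ b) :
    ((univ : Finset (Equiv.Perm (Fin N))).filter
      (fun σ => col (σ a) = col (σ b))).card = (samePairs col).card * (N - 2).factorial := by
  classical
  rw [Finset.card_eq_sum_card_fiberwise
    (f := fun σ : Equiv.Perm (Fin N) => (σ a, σ b)) (t := samePairs col)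
    (fun σ hσ => mem_samePairs.mpr
      ⟨fun h => hab (σ.injective h), (Finset.mem_filter.mp hσ).2⟩)]
  have hfib : ∀ q ∈ samePairs col,
      (((univ : Finset (Equiv.Perm (Fin N))).filter (fun σ => col (σ a) = col (σ b))).filter
        (fun σ => (σ a, σ b) = q)).card = (N - 2).factorial := by
    intro q hq
    obtain ⟨hne, hcol⟩ := mem_samePairs.mp hq
    rw [← card_pair_eq hab hne]
    congr 1
    rw [Finset.filter_filter]
    apply Finset.filter_congr
    intro σ _
    simp only [Prod.ext_iff]
    constructor
    · rintro ⟨-, h1, h2⟩; exact ⟨h1, h2⟩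
    · rintro ⟨h1, h2⟩; exact ⟨by rw [h1, h2, hcol], h1, h2⟩
  rw [Finset.sum_congr rfl hfib, Finset.sum_const, smul_eq_mul]

/-- Number of same-row pairs that collide in a column under `σ`. -/
def collCount {N : ℕ} (row col : Fin N → ℕ) (σ : Equiv.Perm (Fin N)) : ℕ :=
  ((samePairs row).filter (fun p => col (σ p.1) = col (σ p.2))).card

lemma my_ite_mul_ite {a b : Prop} [Decidable a] [Decidable b] :
    ((if a then (1 : ℕ) else 0) * (if b then (1 : ℕ) else 0)) = if a ∧ b then 1 else 0 := by
  by_cases ha : a <;> by_cases hb : b <;> simp [ha, hb]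

lemma sum_collCount {N : ℕ} (row col : Fin N → ℕ) :
    ∑ σ : Equiv.Perm (Fin N), collCount row col σ
      = (samePairs row).card * ((samePairs col).card * (N - 2).factorial) := by
  classical
  have h1 : ∀ σ : Equiv.Perm (Fin N), collCount row col σ
      = ∑ p ∈ samePairs row, if col (σ p.1) = col (σ p.2) then 1 else 0 := by
    intro σ; rw [collCount, Finset.card_filter]
  rw [Finset.sum_congr rfl (fun σ _ => h1 σ), Finset.sum_comm]
  have h2 : ∀ p ∈ samePairs row,
      (∑ σ : Equiv.Perm (Fin N), if col (σ p.1) = col (σ p.2) then 1 else 0)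
        = (samePairs col).card * (N - 2).factorial := by
    intro p hp
    rw [← Finset.card_filter]
    exact coll_card col (mem_samePairs.mp hp).1
  rw [Finset.sum_congr rfl h2, Finset.sum_const, smul_eq_mul]

/-- Triples of distinct slots in a common column class. -/
def sameTriples {N : ℕ} (col : Fin N → ℕ) : Finset (Fin N × Fin N × Fin N) :=
  (univ ×ˢ univ ×ˢ univ).filter
    (fun z => (z.1 ≠ z.2.1 ∧ z.1 ≠ z.2.2 ∧ z.2.1 ≠ z.2.2) ∧
      col z.1 = col z.2.1 ∧ col z.1 = col z.2.2)

lemma mem_sameTriples {N : ℕ} {col : Fin N → ℕ} {z : Fin N × Fin N × Fin N} :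
    z ∈ sameTriples col ↔ (z.1 ≠ z.2.1 ∧ z.1 ≠ z.2.2 ∧ z.2.1 ≠ z.2.2) ∧
      col z.1 = col z.2.1 ∧ col z.1 = col z.2.2 := by
  simp [sameTriples]

lemma sameTriples_card_le {N : ℕ} {col : Fin N → ℕ} {c0 : ℕ}
    (hcol0 : ∀ s : Fin N, (univ.filter (fun s' => col s' = col s)).card ≤ c0) :
    (sameTriples col).card ≤ (samePairs col).card * c0 := by
  classical
  rw [Finset.card_eq_sum_card_fiberwise
    (f := fun z : Fin N × Fin N × Fin N => (z.1, z.2.1)) (t := samePairs col)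
    (fun z hz => by
      obtain ⟨⟨h1, _, _⟩, h4, _⟩ := mem_sameTriples.mp hz
      exact mem_samePairs.mpr ⟨h1, h4⟩)]
  refine le_trans (Finset.sum_le_sum (fun q hq => ?_)) (by rw [Finset.sum_const, smul_eq_mul])
  refine le_trans (Finset.card_le_card_of_injOn (fun z => z.2.2)
    (fun z hz => ?_) (fun z hz z' hz' hzz => ?_)) (hcol0 q.1)
  · simp only [Finset.mem_coe, Finset.mem_filter] at hz
    obtain ⟨hz1, hz2⟩ := hz
    obtain ⟨-, -, h5⟩ := mem_sameTriples.mp hz1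
    simp only [Finset.mem_coe, Finset.mem_filter, Finset.mem_univ, true_and]
    have : z.1 = q.1 := by rw [← hz2]
    rw [← this]; exact h5.symm
  · simp only [Finset.mem_filter, Finset.mem_coe] at hz hz'
    have e1 : z.1 = z'.1 := by rw [show z.1 = q.1 from by rw [← hz.2], show z'.1 = q.1 from by rw [← hz'.2]]
    have e2 : z.2.1 = z'.2.1 := by
      rw [show z.2.1 = q.2 from by rw [← hz.2], show z'.2.1 = q.2 from by rw [← hz'.2]]
    exact Prod.ext e1 (Prod.ext e2 hzz)

lemma collpair_card_le {N : ℕ} (col : Fin N → ℕ) {a b w : Fin N}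
    (hab : a ≠ b) (haw : a ≠ w) (hbw : b ≠ w) (E : Finset (Equiv.Perm (Fin N)))
    (hE : ∀ σ ∈ E, col (σ a) = col (σ b) ∧ col (σ a) = col (σ w)) :
    E.card ≤ (sameTriples col).card * (N - 3).factorial := by
  classical
  rw [Finset.card_eq_sum_card_fiberwise
    (f := fun σ : Equiv.Perm (Fin N) => (σ a, σ b, σ w)) (t := sameTriples col)
    (fun σ hσ => mem_sameTriples.mpr
      ⟨⟨fun h => hab (σ.injective h), fun h => haw (σ.injective h),
        fun h => hbw (σ.injective h)⟩, hE σ hσ⟩)]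
  refine le_trans (Finset.sum_le_sum (fun z _ => ?_)) (by rw [Finset.sum_const, smul_eq_mul])
  refine le_trans (Finset.card_le_card (fun σ hσ => ?_)) (card_triple_le hab haw hbw z.1 z.2.1 z.2.2)
  simp only [Finset.mem_filter, Finset.mem_univ, true_and, Prod.ext_iff] at hσ ⊢
  exact hσ.2

lemma prod_filter_card_le {β : Type*} [DecidableEq β] (P : Finset β)
    (R : β → β → Prop) [DecidableRel R] {m : ℕ}
    (h : ∀ p ∈ P, (P.filter (R p)).card ≤ m) :
    ((P ×ˢ P).filter (fun pq => R pq.1 pq.2)).card ≤ P.card * m := by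
  classical
  rw [Finset.card_eq_sum_card_fiberwise (f := fun pq : β × β => pq.1) (t := P)
    (fun pq hpq => (Finset.mem_product.mp (Finset.mem_filter.mp hpq).1).1)]
  refine le_trans (Finset.sum_le_sum (fun p hp => ?_)) (by rw [Finset.sum_const, smul_eq_mul])
  refine le_trans (Finset.card_le_card_of_injOn (fun pq => pq.2) (fun pq hpq => ?_) ?_) (h p hp)
  · simp only [Finset.mem_coe, Finset.mem_filter, Finset.mem_product] at hpq
    obtain ⟨⟨⟨-, h2⟩, h3⟩, h4⟩ := hpq
    rw [← h4]
    exact Finset.mem_filter.mpr ⟨h2, h3⟩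
  · intro pq hpq pq' hpq' he
    simp only [Finset.mem_coe, Finset.mem_filter] at hpq hpq'
    exact Prod.ext (hpq.2.trans hpq'.2.symm) he

lemma samePairs_filter_fst_le {N : ℕ} {row : Fin N → ℕ} {r0 : ℕ}
    (hrow0 : ∀ t : Fin N, (univ.filter (fun t' => row t' = row t)).card ≤ r0) (a : Fin N) :
    ((samePairs row).filter (fun q => q.1 = a)).card ≤ r0 := by
  classical
  refine le_trans (Finset.card_le_card_of_injOn (fun q => q.2) (fun q hq => ?_) ?_) (hrow0 a)
  · simp only [Finset.mem_coe, Finset.mem_filter, mem_samePairs] at hq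
    obtain ⟨⟨-, h2⟩, h3⟩ := hq
    simp only [Finset.mem_coe, Finset.mem_filter, Finset.mem_univ, true_and]
    rw [← h3, ← h2]
  · intro q hq q' hq' he
    simp only [Finset.mem_coe, Finset.mem_filter] at hq hq'
    exact Prod.ext (hq.2.trans hq'.2.symm) he

lemma samePairs_filter_snd_le {N : ℕ} {row : Fin N → ℕ} {r0 : ℕ}
    (hrow0 : ∀ t : Fin N, (univ.filter (fun t' => row t' = row t)).card ≤ r0) (a : Fin N) :
    ((samePairs row).filter (fun q => q.2 = a)).card ≤ r0 := by
  classical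
  refine le_trans (Finset.card_le_card_of_injOn (fun q => q.1) (fun q hq => ?_) ?_) (hrow0 a)
  · simp only [Finset.mem_coe, Finset.mem_filter, mem_samePairs] at hq
    obtain ⟨⟨-, h2⟩, h3⟩ := hq
    simp only [Finset.mem_coe, Finset.mem_filter, Finset.mem_univ, true_and]
    rw [← h3, h2]
  · intro q hq q' hq' he
    simp only [Finset.mem_coe, Finset.mem_filter] at hq hq'
    exact Prod.ext he (hq.2.trans hq'.2.symm)

lemma sum_sq_collCount {N : ℕ} (row col : Fin N → ℕ) {r0 c0 : ℕ}
    (hrow0 : ∀ t : Fin N, (univ.filter (fun t' => row t' = row t)).card ≤ r0)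
    (hcol0 : ∀ s : Fin N, (univ.filter (fun s' => col s' = col s)).card ≤ c0) :
    ∑ σ : Equiv.Perm (Fin N), (collCount row col σ) ^ 2 ≤
      ((samePairs row).card * 2) * ((samePairs col).card * (N - 2).factorial)
      + ((samePairs row).card * (4 * r0)) * ((samePairs col).card * c0 * (N - 3).factorial)
      + ((samePairs row).card * (samePairs row).card) *
          ((samePairs col).card * (samePairs col).card * (N - 4).factorial) := by
  classical
  set P := samePairs row with hP
  set Q := samePairs col with hQ
  set n : (Fin N × Fin N) × (Fin N × Fin N) → ℕ := fun pq =>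
    ((univ : Finset (Equiv.Perm (Fin N))).filter
      (fun σ => col (σ pq.1.1) = col (σ pq.1.2) ∧ col (σ pq.2.1) = col (σ pq.2.2))).card
    with hn
  -- Step 1: rewrite the sum of squares
  have step1 : ∑ σ : Equiv.Perm (Fin N), (collCount row col σ) ^ 2
      = ∑ pq ∈ P ×ˢ P, n pq := by
    have h1 : ∀ σ : Equiv.Perm (Fin N), (collCount row col σ) ^ 2
        = ∑ pq ∈ P ×ˢ P, (if col (σ pq.1.1) = col (σ pq.1.2) ∧
            col (σ pq.2.1) = col (σ pq.2.2) then 1 else 0) := by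
      intro σ
      rw [sq, collCount, Finset.card_filter, Finset.sum_mul_sum, Finset.sum_product]
      exact Finset.sum_congr rfl (fun p _ => Finset.sum_congr rfl
        (fun q _ => my_ite_mul_ite))
    rw [Finset.sum_congr rfl (fun σ _ => h1 σ), Finset.sum_comm]
    exact Finset.sum_congr rfl (fun pq _ => (Finset.card_filter _ _).symm)
  rw [step1,
    ← Finset.sum_filter_add_sum_filter_not (P ×ˢ P)
      (fun pq => pq.2 = pq.1 ∨ pq.2 = Prod.swap pq.1) n,
    ← Finset.sum_filter_add_sum_filter_not
      ((P ×ˢ P).filter (fun pq => ¬ (pq.2 = pq.1 ∨ pq.2 = Prod.swap pq.1)))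
      (fun pq => pq.2.1 = pq.1.1 ∨ pq.2.1 = pq.1.2 ∨ pq.2.2 = pq.1.1 ∨ pq.2.2 = pq.1.2) n]
  have memP : ∀ {p : Fin N × Fin N}, p ∈ P → p.1 ≠ p.2 ∧ row p.1 = row p.2 :=
    fun hp => mem_samePairs.mp hp
  -- Case A
  have caseA : ∑ pq ∈ (P ×ˢ P).filter (fun pq => pq.2 = pq.1 ∨ pq.2 = Prod.swap pq.1), n pq
      ≤ (P.card * 2) * (Q.card * (N - 2).factorial) := by
    have hbound : ∀ pq ∈ (P ×ˢ P).filter (fun pq => pq.2 = pq.1 ∨ pq.2 = Prod.swap pq.1),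
        n pq ≤ Q.card * (N - 2).factorial := by
      intro pq hpq
      simp only [Finset.mem_filter, Finset.mem_product] at hpq
      have hne := (memP hpq.1.1).1
      calc n pq ≤ ((univ : Finset (Equiv.Perm (Fin N))).filter
          (fun σ => col (σ pq.1.1) = col (σ pq.1.2))).card := by
            apply Finset.card_le_card
            apply Finset.monotone_filter_right
            intro σ _ hσ; exact hσ.1
        _ = Q.card * (N - 2).factorial := coll_card col hne
    refine le_trans (Finset.sum_le_sum hbound) ?_
    rw [Finset.sum_const, smul_eq_mul]
    apply Nat.mul_le_mul_right
    exact prod_filter_card_le P (fun p q => q = p ∨ q = Prod.swap p) (fun p hp =>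
      le_trans (Finset.card_le_card (fun q hq =>
        (Finset.mem_filter.mp hq).2.elim
          (fun h => by rw [h]; exact Finset.mem_insert_self p {Prod.swap p})
          (fun h => by rw [h]; exact Finset.mem_insert_of_mem (Finset.mem_singleton_self _))))
        (le_trans (Finset.card_insert_le _ _) (by simp)))
  -- Case B
  have caseB : ∑ pq ∈ ((P ×ˢ P).filter
        (fun pq => ¬ (pq.2 = pq.1 ∨ pq.2 = Prod.swap pq.1))).filter
        (fun pq => pq.2.1 = pq.1.1 ∨ pq.2.1 = pq.1.2 ∨ pq.2.2 = pq.1.1 ∨ pq.2.2 = pq.1.2), n pq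
      ≤ (P.card * (4 * r0)) * (Q.card * c0 * (N - 3).factorial) := by
    have hbound : ∀ pq ∈ ((P ×ˢ P).filter
        (fun pq => ¬ (pq.2 = pq.1 ∨ pq.2 = Prod.swap pq.1))).filter
        (fun pq => pq.2.1 = pq.1.1 ∨ pq.2.1 = pq.1.2 ∨ pq.2.2 = pq.1.1 ∨ pq.2.2 = pq.1.2),
        n pq ≤ Q.card * c0 * (N - 3).factorial := by
      intro pq hpq
      simp only [Finset.mem_filter, Finset.mem_product] at hpq
      obtain ⟨⟨⟨hp1, hp2⟩, hnd⟩, hs⟩ := hpq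
      have hab := (memP hp1).1
      have huw := (memP hp2).1
      have key : n pq ≤ (sameTriples col).card * (N - 3).factorial := by
        rcases hs with h | h | h | h
        · refine collpair_card_le col hab (fun e => huw (h.trans e))
            (fun e => hnd (Or.inl (Prod.ext h e.symm))) _ (fun σ hσ => ?_)
          obtain ⟨h1, h2⟩ := (Finset.mem_filter.mp hσ).2
          rw [h] at h2
          exact ⟨h1, h2⟩
        · refine collpair_card_le col hab (fun e => hnd (Or.inr (Prod.ext h e.symm)))
            (fun e => huw (h.trans e)) _ (fun σ hσ => ?_)
          obtain ⟨h1, h2⟩ := (Finset.mem_filter.mp hσ).2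
          rw [h] at h2
          exact ⟨h1, h1.trans h2⟩
        · refine collpair_card_le col hab (fun e => huw (e.symm.trans h.symm))
            (fun e => hnd (Or.inr (Prod.ext e.symm h))) _ (fun σ hσ => ?_)
          obtain ⟨h1, h2⟩ := (Finset.mem_filter.mp hσ).2
          rw [h] at h2
          exact ⟨h1, h2.symm⟩
        · refine collpair_card_le col hab (fun e => hnd (Or.inl (Prod.ext e.symm h)))
            (fun e => huw (e.symm.trans h.symm)) _ (fun σ hσ => ?_)
          obtain ⟨h1, h2⟩ := (Finset.mem_filter.mp hσ).2
          rw [h] at h2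
          exact ⟨h1, h1.trans h2.symm⟩
      exact le_trans key (Nat.mul_le_mul_right _ (sameTriples_card_le hcol0))
    refine le_trans (Finset.sum_le_sum hbound) ?_
    rw [Finset.sum_const, smul_eq_mul]
    apply Nat.mul_le_mul_right
    refine le_trans (Finset.card_le_card ?_) (prod_filter_card_le P
      (fun p q => q.1 = p.1 ∨ q.1 = p.2 ∨ q.2 = p.1 ∨ q.2 = p.2) (fun p hp => ?_))
    · rw [Finset.filter_filter]
      apply Finset.monotone_filter_right
      intro pq _ hpq; exact hpq.2
    · rw [Finset.filter_or, Finset.filter_or, Finset.filter_or]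
      refine le_trans (Finset.card_union_le _ _) ?_
      refine le_trans (Nat.add_le_add (samePairs_filter_fst_le hrow0 p.1)
        (Finset.card_union_le _ _)) ?_
      refine le_trans (Nat.add_le_add_left (Nat.add_le_add
        (samePairs_filter_fst_le hrow0 p.2) (Finset.card_union_le _ _)) _) ?_
      refine le_trans (Nat.add_le_add_left (Nat.add_le_add_left (Nat.add_le_add
        (samePairs_filter_snd_le hrow0 p.1) (samePairs_filter_snd_le hrow0 p.2)) _) _) ?_
      omega
  -- Case C
  have caseC : ∑ pq ∈ ((P ×ˢ P).filter
        (fun pq => ¬ (pq.2 = pq.1 ∨ pq.2 = Prod.swap pq.1))).filter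
        (fun pq => ¬ (pq.2.1 = pq.1.1 ∨ pq.2.1 = pq.1.2 ∨ pq.2.2 = pq.1.1 ∨ pq.2.2 = pq.1.2)),
        n pq
      ≤ (P.card * P.card) * (Q.card * Q.card * (N - 4).factorial) := by
    have hbound : ∀ pq ∈ ((P ×ˢ P).filter
        (fun pq => ¬ (pq.2 = pq.1 ∨ pq.2 = Prod.swap pq.1))).filter
        (fun pq => ¬ (pq.2.1 = pq.1.1 ∨ pq.2.1 = pq.1.2 ∨ pq.2.2 = pq.1.1 ∨ pq.2.2 = pq.1.2)),
        n pq ≤ Q.card * Q.card * (N - 4).factorial := by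
      intro pq hpq
      simp only [Finset.mem_filter, Finset.mem_product] at hpq
      obtain ⟨⟨⟨hp1, hp2⟩, -⟩, hs⟩ := hpq
      push_neg at hs
      obtain ⟨hs1, hs2, hs3, hs4⟩ := hs
      have hab := (memP hp1).1
      have huw := (memP hp2).1
      show ((univ : Finset (Equiv.Perm (Fin N))).filter
        (fun σ => col (σ pq.1.1) = col (σ pq.1.2) ∧
          col (σ pq.2.1) = col (σ pq.2.2))).card ≤ _
      rw [Finset.card_eq_sum_card_fiberwise
        (f := fun σ : Equiv.Perm (Fin N) =>
          ((σ pq.1.1, σ pq.1.2), (σ pq.2.1, σ pq.2.2))) (t := Q ×ˢ Q)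
        (fun σ hσ => by
          obtain ⟨h1, h2⟩ := (Finset.mem_filter.mp hσ).2
          exact Finset.mem_product.mpr
            ⟨mem_samePairs.mpr ⟨fun e => hab (σ.injective e), h1⟩,
             mem_samePairs.mpr ⟨fun e => huw (σ.injective e), h2⟩⟩)]
      have hfib : ∀ y ∈ Q ×ˢ Q,
          ((((univ : Finset (Equiv.Perm (Fin N))).filter
            (fun σ => col (σ pq.1.1) = col (σ pq.1.2) ∧
              col (σ pq.2.1) = col (σ pq.2.2))).filter
            (fun σ => ((σ pq.1.1, σ pq.1.2), (σ pq.2.1, σ pq.2.2)) = y)).card)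
          ≤ (N - 4).factorial := by
        intro y _
        refine le_trans (Finset.card_le_card (fun σ hσ => ?_))
          (card_quad_le hab (Ne.symm hs1) (Ne.symm hs3) (Ne.symm hs2) (Ne.symm hs4) huw
            y.1.1 y.1.2 y.2.1 y.2.2)
        simp only [Finset.mem_filter, Finset.mem_univ, true_and, Prod.ext_iff] at hσ ⊢
        obtain ⟨-, ⟨e1, e2⟩, e3, e4⟩ := hσ
        exact ⟨e1, e2, e3, e4⟩
      refine le_trans (Finset.sum_le_sum hfib) ?_
      rw [Finset.sum_const, smul_eq_mul, Finset.card_product]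
    refine le_trans (Finset.sum_le_sum hbound) ?_
    rw [Finset.sum_const, smul_eq_mul]
    apply Nat.mul_le_mul_right
    calc (((P ×ˢ P).filter _).filter _).card
        ≤ ((P ×ˢ P).filter _).card := Finset.card_filter_le _ _
      _ ≤ (P ×ˢ P).card := Finset.card_filter_le _ _
      _ = P.card * P.card := Finset.card_product P P
  refine le_trans (Nat.add_le_add caseA (Nat.add_le_add caseB caseC)) ?_
  omega

set_option maxHeartbeats 1000000 in
lemma master_real {ε x y n f2 f3 f4 r0 c0 s : ℝ}
    (hε0 : 0 < ε) (hε1 : ε ≤ 1)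
    (hx : 1 ≤ x) (hy : 1 ≤ y) (hn : 49 ≤ n)
    (hf3 : 0 < f3) (hf4 : 0 < f4)
    (h2 : f2 = (n - 2) * f3) (h3 : f3 = (n - 3) * f4)
    (hxyP : 2304 * n ^ 2 ≤ ε ^ 2 * (x * y))
    (hs2 : s ^ 2 = x * y) (hs0 : 0 ≤ s)
    (hs48 : 48 * n ≤ ε * s) (hsle : s ≤ n ^ 2)
    (hrc : r0 * c0 ≤ 3 * n + s) (hr0 : 0 ≤ r0) (hc0 : 0 ≤ c0) :
    (n * (n - 1) * f2) * ((x * 2) * (y * f2) + (x * (4 * r0)) * (y * c0 * f3)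
        + (x * x) * (y * y * f4))
      ≤ (1 + ε) * (x * (y * f2)) ^ 2 := by
  have hn0 : (0:ℝ) < n := by linarith
  have hxy0 : (0:ℝ) < x * y := by nlinarith
  have hf2 : (0:ℝ) < f2 := by rw [h2]; exact mul_pos (by linarith) hf3
  have baseA : 6 * (n * (n - 1)) ≤ ε * (x * y) := by
    have h1 : 0 ≤ ε * (x * y) * (1 - ε) :=
      mul_nonneg (mul_nonneg hε0.le hxy0.le) (by linarith)
    nlinarith [hxyP, mul_pos hn0 hn0]
  have hs' : 48 * n ≤ s := by
    have h1 : 0 ≤ (1 - ε) * s := mul_nonneg (by linarith) hs0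
    nlinarith
  have baseB : 12 * (r0 * c0) * (n * (n - 1)) ≤ ε * (x * y) * (n - 2) := by
    have h1 : 48 * n * (s * (n - 2)) ≤ ε * s * (s * (n - 2)) := by
      apply mul_le_mul_of_nonneg_right hs48
      apply mul_nonneg hs0; linarith
    have ha : 0 ≤ 12 * n ^ 2 * (s - 3 * n) := by
      apply mul_nonneg (by positivity); linarith
    have hb : 0 ≤ 12 * s * n * (2 * n - 7) := by
      apply mul_nonneg (by positivity); linarith
    have h2' : 12 * (3 * n + s) * (n * (n - 1)) ≤ 48 * n * (s * (n - 2)) := by nlinarith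
    have h3' : 12 * (r0 * c0) * (n * (n - 1)) ≤ 12 * (3 * n + s) * (n * (n - 1)) := by
      have hnn : (0:ℝ) ≤ n * (n - 1) := by nlinarith
      nlinarith
    calc 12 * (r0 * c0) * (n * (n - 1)) ≤ 48 * n * (s * (n - 2)) := le_trans h3' h2'
      _ ≤ ε * s * (s * (n - 2)) := h1
      _ = ε * (x * y) * (n - 2) := by rw [← hs2]; ring
  have hεn : 48 ≤ ε * n := by
    have h2' : ε * s ≤ ε * n ^ 2 := mul_le_mul_of_nonneg_left hsle hε0.le
    have : 48 * n ≤ (ε * n) * n := by nlinarith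
    exact le_of_mul_le_mul_right (by linarith) hn0
  have baseC : 3 * (n * (n - 1)) ≤ (3 + ε) * ((n - 2) * (n - 3)) := by
    have hc1 : 0 ≤ (ε * n - 48) * n := mul_nonneg (by linarith) hn0.le
    have hc2 : 0 ≤ (1 - ε) * n := mul_nonneg (by linarith) hn0.le
    nlinarith
  -- assemble
  have h3pos : (0:ℝ) < 3 := by norm_num
  have hA : (n * (n - 1) * f2) * ((x * 2) * (y * f2)) ≤ ε / 3 * (x * (y * f2)) ^ 2 := by
    have hM : (0:ℝ) ≤ (x * y) * f2 ^ 2 := by positivity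
    calc (n * (n - 1) * f2) * ((x * 2) * (y * f2))
        = (6 * (n * (n - 1))) * ((x * y) * f2 ^ 2) / 3 := by ring
      _ ≤ (ε * (x * y)) * ((x * y) * f2 ^ 2) / 3 :=
          (div_le_div_iff_of_pos_right h3pos).mpr (mul_le_mul_of_nonneg_right baseA hM)
      _ = ε / 3 * (x * (y * f2)) ^ 2 := by ring
  have hB : (n * (n - 1) * f2) * ((x * (4 * r0)) * (y * c0 * f3))
      ≤ ε / 3 * (x * (y * f2)) ^ 2 := by
    have hM : (0:ℝ) ≤ (x * y) * (n - 2) * f3 ^ 2 := by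
      apply mul_nonneg (mul_nonneg hxy0.le (by linarith)); positivity
    calc (n * (n - 1) * f2) * ((x * (4 * r0)) * (y * c0 * f3))
        = (12 * (r0 * c0) * (n * (n - 1))) * ((x * y) * (n - 2) * f3 ^ 2) / 3 := by
          rw [h2]; ring
      _ ≤ (ε * (x * y) * (n - 2)) * ((x * y) * (n - 2) * f3 ^ 2) / 3 :=
          (div_le_div_iff_of_pos_right h3pos).mpr (mul_le_mul_of_nonneg_right baseB hM)
      _ = ε / 3 * (x * (y * ((n - 2) * f3))) ^ 2 := by ring
      _ = ε / 3 * (x * (y * f2)) ^ 2 := by rw [← h2]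
  have hC : (n * (n - 1) * f2) * ((x * x) * (y * y * f4))
      ≤ (1 + ε / 3) * (x * (y * f2)) ^ 2 := by
    have hM : (0:ℝ) ≤ ((n - 2) * (n - 3)) * ((x * x) * (y * y) * f4 ^ 2) := by
      apply mul_nonneg (mul_nonneg (by linarith) (by linarith)); positivity
    calc (n * (n - 1) * f2) * ((x * x) * (y * y * f4))
        = (3 * (n * (n - 1))) * (((n - 2) * (n - 3)) * ((x * x) * (y * y) * f4 ^ 2)) / 3 := by
          rw [h2, h3]; ring
      _ ≤ ((3 + ε) * ((n - 2) * (n - 3)))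
            * (((n - 2) * (n - 3)) * ((x * x) * (y * y) * f4 ^ 2)) / 3 :=
          (div_le_div_iff_of_pos_right h3pos).mpr (mul_le_mul_of_nonneg_right baseC hM)
      _ = (1 + ε / 3) * (x * (y * ((n - 2) * ((n - 3) * f4)))) ^ 2 := by ring
      _ = (1 + ε / 3) * (x * (y * f2)) ^ 2 := by rw [← h3, ← h2]
  nlinarith [hA, hB, hC]

set_option maxHeartbeats 1000000 in
lemma key_bound {N : ℕ} (r c : ℕ → ℕ) (row col : Fin N → ℕ)
    (hrow : ∀ i, (univ.filter (fun t => row t = i)).card = r i)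
    (hcol : ∀ j, (univ.filter (fun t => col t = j)).card = c j)
    (hrsupp : ∀ i, N ≤ i → r i = 0) (hcsupp : ∀ j, N ≤ j → c j = 0)
    (hrmono : ∀ i i', i ≤ i' → r i' ≤ r i) (hcmono : ∀ j j', j ≤ j' → c j' ≤ c j)
    (hrN : ∑ i ∈ Finset.range N, r i = N) (hcN : ∑ j ∈ Finset.range N, c j = N)
    {ε : ℝ} (hε0 : 0 < ε) (hε1 : ε ≤ 1)
    (hbig : ((48 / ε) ^ 2 + 1) * (N : ℝ) ^ 2 <
      ((∑ i ∈ Finset.range N, r i * (r i - 1) : ℕ) : ℝ)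
        * ((∑ j ∈ Finset.range N, c j * (c j - 1) : ℕ) : ℝ)) :
    ((univ.filter (fun σ : Equiv.Perm (Fin N) => collCount row col σ = 0)).card : ℝ)
      / (N.factorial : ℝ) ≤ ε := by
  classical
  set R : ℕ := ∑ i ∈ Finset.range N, r i * (r i - 1) with hR
  set C : ℕ := ∑ j ∈ Finset.range N, c j * (c j - 1) with hC
  set n : ℝ := (N : ℝ) with hn
  set x : ℝ := (R : ℝ) with hx
  set y : ℝ := (C : ℝ) with hy
  have hε : (48 : ℝ) ≤ 48 / ε := by
    rw [le_div_iff₀ hε0]; linarith only [hε1]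
  have hK0 : (2304 : ℝ) ≤ (48 / ε) ^ 2 := by nlinarith only [hε]
  -- bounds R ≤ N², C ≤ N²
  have hriN : ∀ i ∈ Finset.range N, r i ≤ N := fun i hi => by
    calc r i ≤ ∑ i ∈ Finset.range N, r i :=
      Finset.single_le_sum (fun _ _ => Nat.zero_le _) hi
    _ = N := hrN
  have hcjN : ∀ j ∈ Finset.range N, c j ≤ N := fun j hj => by
    calc c j ≤ ∑ j ∈ Finset.range N, c j :=
      Finset.single_le_sum (fun _ _ => Nat.zero_le _) hj
    _ = N := hcN
  have hRN2 : R ≤ N * N := by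
    calc R ≤ ∑ i ∈ Finset.range N, r i * N := by
          apply Finset.sum_le_sum
          intro i hi
          exact Nat.mul_le_mul (le_refl _) (le_trans (Nat.sub_le _ _) (hriN i hi))
      _ = N * N := by rw [← Finset.sum_mul, hrN]
  have hCN2 : C ≤ N * N := by
    calc C ≤ ∑ j ∈ Finset.range N, c j * N := by
          apply Finset.sum_le_sum
          intro j hj
          exact Nat.mul_le_mul (le_refl _) (le_trans (Nat.sub_le _ _) (hcjN j hj))
      _ = N * N := by rw [← Finset.sum_mul, hcN]
  have hxn : x ≤ n ^ 2 := by
    rw [hx, hn, sq, ← Nat.cast_mul]; exact_mod_cast hRN2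
  have hyn : y ≤ n ^ 2 := by
    rw [hy, hn, sq, ← Nat.cast_mul]; exact_mod_cast hCN2
  have hn0' : (0:ℝ) ≤ n := Nat.cast_nonneg N
  -- N ≥ 49
  have hx0 : (0:ℝ) ≤ x := Nat.cast_nonneg _
  have hy0 : (0:ℝ) ≤ y := Nat.cast_nonneg _
  have hxy0' : (0:ℝ) < x * y := by
    have hKn : (0:ℝ) ≤ ((48 / ε) ^ 2 + 1) * n ^ 2 := by positivity
    linarith only [hbig, hKn]
  have hN49 : 49 ≤ N := by
    by_contra h
    push_neg at h
    have hn48 : n ≤ 48 := by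
      rw [hn]; exact_mod_cast Nat.lt_succ_iff.mp (by omega)
    have hxy48 : x * y ≤ 2304 * n ^ 2 := by
      calc x * y ≤ n ^ 2 * n ^ 2 := mul_le_mul hxn hyn hy0 (sq_nonneg n)
        _ ≤ 2304 * n ^ 2 := by
          have hq : 0 ≤ ((48 - n) * (48 + n)) * n ^ 2 :=
            mul_nonneg (mul_nonneg (by linarith only [hn48])
              (by linarith only [hn0'])) (sq_nonneg n)
          nlinarith only [hq]
    have h' : 2304 * n ^ 2 ≤ (48 / ε) ^ 2 * n ^ 2 :=
      mul_le_mul_of_nonneg_right hK0 (sq_nonneg n)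
    linarith only [hbig, hxy48, h', sq_nonneg n]
  have hn49 : (49:ℝ) ≤ n := by rw [hn]; exact_mod_cast hN49
  have hn0 : (0:ℝ) < n := by linarith only [hn49]
  have hxy0 : (0:ℝ) < x * y := hxy0'
  have hR1 : 1 ≤ R := by
    rcases Nat.eq_zero_or_pos R with h | h
    · exfalso
      rw [hx, h] at hxy0
      simp at hxy0
    · exact h
  have hC1 : 1 ≤ C := by
    rcases Nat.eq_zero_or_pos C with h | h
    · exfalso
      rw [hy, h] at hxy0
      simp at hxy0
    · exact h
  have hx1 : (1:ℝ) ≤ x := by rw [hx]; exact_mod_cast hR1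
  have hy1 : (1:ℝ) ≤ y := by rw [hy]; exact_mod_cast hC1
  -- r0 c0 facts
  set r0 : ℕ := r 0 with hr0def
  set c0 : ℕ := c 0 with hc0def
  have hr0N : ∀ t : Fin N, (univ.filter (fun t' => row t' = row t)).card ≤ r0 :=
    fun t => by rw [hrow]; exact hrmono 0 _ (Nat.zero_le _)
  have hc0N : ∀ s : Fin N, (univ.filter (fun s' => col s' = col s)).card ≤ c0 :=
    fun s => by rw [hcol]; exact hcmono 0 _ (Nat.zero_le _)
  have hr01 : 1 ≤ r0 := by
    by_contra h
    push_neg at h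
    have h0 : r 0 = 0 := by omega
    have : ∀ i ∈ Finset.range N, r i = 0 :=
      fun i _ => Nat.le_zero.mp (h0 ▸ hrmono 0 i (Nat.zero_le _))
    rw [Finset.sum_congr rfl this, Finset.sum_const, smul_eq_mul, mul_zero] at hrN
    omega
  have hc01 : 1 ≤ c0 := by
    by_contra h
    push_neg at h
    have h0 : c 0 = 0 := by omega
    have : ∀ j ∈ Finset.range N, c j = 0 :=
      fun j _ => Nat.le_zero.mp (h0 ▸ hcmono 0 j (Nat.zero_le _))
    rw [Finset.sum_congr rfl this, Finset.sum_const, smul_eq_mul, mul_zero] at hcN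
    omega
  have hr0R : (r0 - 1) * (r0 - 1) ≤ R := by
    calc (r0 - 1) * (r0 - 1) ≤ r0 * (r0 - 1) :=
        Nat.mul_le_mul_right _ (Nat.sub_le _ _)
      _ ≤ R := Finset.single_le_sum (f := fun i => r i * (r i - 1))
          (fun _ _ => Nat.zero_le _) (Finset.mem_range.mpr (by omega))
  have hc0C : (c0 - 1) * (c0 - 1) ≤ C := by
    calc (c0 - 1) * (c0 - 1) ≤ c0 * (c0 - 1) :=
        Nat.mul_le_mul_right _ (Nat.sub_le _ _)
      _ ≤ C := Finset.single_le_sum (f := fun j => c j * (c j - 1))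
          (fun _ _ => Nat.zero_le _) (Finset.mem_range.mpr (by omega))
  have hr0real : (r0 : ℝ) ≤ 1 + Real.sqrt x := by
    have h1 : ((r0:ℝ) - 1) ^ 2 ≤ x := by
      have := hr0R
      have hcast : ((r0 - 1 : ℕ) : ℝ) = (r0:ℝ) - 1 := by
        rw [Nat.cast_sub hr01]; norm_num
      rw [hx]
      calc ((r0:ℝ) - 1) ^ 2 = ((r0-1:ℕ):ℝ) * ((r0-1:ℕ):ℝ) := by rw [hcast]; ring
        _ ≤ (R:ℝ) := by exact_mod_cast hr0R
    have := Real.le_sqrt_of_sq_le h1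
    linarith
  have hc0real : (c0 : ℝ) ≤ 1 + Real.sqrt y := by
    have h1 : ((c0:ℝ) - 1) ^ 2 ≤ y := by
      have hcast : ((c0 - 1 : ℕ) : ℝ) = (c0:ℝ) - 1 := by
        rw [Nat.cast_sub hc01]; norm_num
      rw [hy]
      calc ((c0:ℝ) - 1) ^ 2 = ((c0-1:ℕ):ℝ) * ((c0-1:ℕ):ℝ) := by rw [hcast]; ring
        _ ≤ (C:ℝ) := by exact_mod_cast hc0C
    have := Real.le_sqrt_of_sq_le h1
    linarith
  have hsqx : Real.sqrt x ≤ n := by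
    calc Real.sqrt x ≤ Real.sqrt (n ^ 2) := Real.sqrt_le_sqrt hxn
      _ = n := Real.sqrt_sq hn0'
  have hsqy : Real.sqrt y ≤ n := by
    calc Real.sqrt y ≤ Real.sqrt (n ^ 2) := Real.sqrt_le_sqrt hyn
      _ = n := Real.sqrt_sq hn0'
  set s : ℝ := Real.sqrt (x * y) with hsdef
  have hs0 : 0 ≤ s := Real.sqrt_nonneg _
  have hs2 : s ^ 2 = x * y := Real.sq_sqrt hxy0.le
  have hsxy : s = Real.sqrt x * Real.sqrt y := Real.sqrt_mul (by linarith) y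
  have hrc : (r0:ℝ) * (c0:ℝ) ≤ 3 * n + s := by
    have h1 : (r0:ℝ) * (c0:ℝ) ≤ (1 + Real.sqrt x) * (1 + Real.sqrt y) :=
      mul_le_mul hr0real hc0real (Nat.cast_nonneg _) (by positivity)
    have h2 : (1 + Real.sqrt x) * (1 + Real.sqrt y)
        = 1 + Real.sqrt x + Real.sqrt y + s := by rw [hsxy]; ring
    linarith
  have hxyge : (48 / ε) ^ 2 * n ^ 2 ≤ x * y := by linarith only [hbig, sq_nonneg n]
  have h48n : (48 / ε) * n ≤ s := by
    apply Real.le_sqrt_of_sq_le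
    calc ((48 / ε) * n) ^ 2 = (48 / ε) ^ 2 * n ^ 2 := by ring
      _ ≤ x * y := hxyge
  have hs48 : 48 * n ≤ ε * s := by
    have := mul_le_mul_of_nonneg_left h48n hε0.le
    calc 48 * n = ε * ((48 / ε) * n) := by field_simp
      _ ≤ ε * s := this
  have hsle : s ≤ n ^ 2 := by
    calc s ≤ Real.sqrt ((n ^ 2) ^ 2) := by
          exact Real.sqrt_le_sqrt
            (le_trans (mul_le_mul hxn hyn hy0 (sq_nonneg n)) (le_of_eq (by ring)))
      _ = n ^ 2 := Real.sqrt_sq (by positivity)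
  have hxyP : 2304 * n ^ 2 ≤ ε ^ 2 * (x * y) := by
    have h1 : ε ^ 2 * ((48 / ε) ^ 2 * n ^ 2) ≤ ε ^ 2 * (x * y) :=
      mul_le_mul_of_nonneg_left hxyge (sq_nonneg ε)
    have h2 : ε ^ 2 * ((48 / ε) ^ 2 * n ^ 2) = 2304 * n ^ 2 := by
      field_simp
      ring
    linarith
  -- factorial facts
  set f2 : ℝ := ((N - 2).factorial : ℝ) with hf2def
  set f3 : ℝ := ((N - 3).factorial : ℝ) with hf3def
  set f4 : ℝ := ((N - 4).factorial : ℝ) with hf4def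
  have hf3 : (0:ℝ) < f3 := by rw [hf3def]; exact_mod_cast (N - 3).factorial_pos
  have hf4 : (0:ℝ) < f4 := by rw [hf4def]; exact_mod_cast (N - 4).factorial_pos
  have hf2pos : (0:ℝ) < f2 := by rw [hf2def]; exact_mod_cast (N - 2).factorial_pos
  have hcast2 : ((N - 2 : ℕ) : ℝ) = n - 2 := by
    rw [Nat.cast_sub (by omega)]; norm_num [hn]
  have hcast3 : ((N - 3 : ℕ) : ℝ) = n - 3 := by
    rw [Nat.cast_sub (by omega)]; norm_num [hn]
  have hcast1 : ((N - 1 : ℕ) : ℝ) = n - 1 := by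
    rw [Nat.cast_sub (by omega)]; norm_num [hn]
  have h2 : f2 = (n - 2) * f3 := by
    have e2 : N - 2 = (N - 3) + 1 := by omega
    have : (N - 2).factorial = (N - 2) * (N - 3).factorial := by
      rw [e2, Nat.factorial_succ, ← e2]
    rw [hf2def, this, Nat.cast_mul, hcast2, hf3def]
  have h3 : f3 = (n - 3) * f4 := by
    have e3 : N - 3 = (N - 4) + 1 := by omega
    have : (N - 3).factorial = (N - 3) * (N - 4).factorial := by
      rw [e3, Nat.factorial_succ, ← e3]
    rw [hf3def, this, Nat.cast_mul, hcast3, hf4def]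
  have hNfaceq : N.factorial = N * ((N - 1) * (N - 2).factorial) := by
    have e0 : N = (N - 1) + 1 := by omega
    have e1 : N - 1 = (N - 2) + 1 := by omega
    calc N.factorial = ((N-1) + 1).factorial := by rw [← e0]
      _ = N * (N - 1).factorial := by rw [Nat.factorial_succ, ← e0]
      _ = N * ((N - 1) * (N - 2).factorial) := by
          rw [show (N-1).factorial = (N-1) * (N-2).factorial from by
            rw [e1, Nat.factorial_succ, ← e1]]
  have hKf : (N.factorial : ℝ) = n * (n - 1) * f2 := by
    rw [hNfaceq]
    push_cast
    rw [hcast1]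
    ring
  -- sums
  have hPcard : (samePairs row).card = R := samePairs_card hrow hrsupp
  have hQcard : (samePairs col).card = C := samePairs_card hcol hcsupp
  have hS1 : ∑ σ : Equiv.Perm (Fin N), collCount row col σ = R * (C * (N - 2).factorial) := by
    rw [sum_collCount, hPcard, hQcard]
  have hS2 : ∑ σ : Equiv.Perm (Fin N), (collCount row col σ) ^ 2 ≤
      (R * 2) * (C * (N - 2).factorial)
      + (R * (4 * r0)) * (C * c0 * (N - 3).factorial)
      + (R * R) * (C * C * (N - 4).factorial) := by
    have := sum_sq_collCount row col hr0N hc0N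
    rwa [hPcard, hQcard] at this
  -- real quantities
  set a : ℝ := x * (y * f2) with hadef
  set b : ℝ := ((∑ σ : Equiv.Perm (Fin N), (collCount row col σ) ^ 2 : ℕ) : ℝ) with hbdef
  set Z : Finset (Equiv.Perm (Fin N)) :=
    univ.filter (fun σ => ¬ collCount row col σ = 0) with hZdef
  have hb0 : (0:ℝ) ≤ b := Nat.cast_nonneg _
  -- Cauchy-Schwarz
  have hCS : a ^ 2 ≤ (Z.card : ℝ) * b := by
    have hsum : (∑ σ ∈ Z, ((collCount row col σ : ℝ)))
        = ∑ σ : Equiv.Perm (Fin N), ((collCount row col σ : ℝ)) := by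
      apply Finset.sum_subset (Finset.filter_subset _ _)
      intro σ _ hσ
      have hσ' : collCount row col σ = 0 := by
        by_contra hne
        exact hσ (Finset.mem_filter.mpr ⟨Finset.mem_univ _, hne⟩)
      rw [hσ']; norm_num
    have hcs0 : (∑ σ ∈ Z, ((collCount row col σ : ℝ))) ^ 2
        ≤ (Z.card : ℝ) * ∑ σ ∈ Z, ((collCount row col σ : ℝ)) ^ 2 :=
      sq_sum_le_card_mul_sum_sq
    have hsub : (∑ σ ∈ Z, ((collCount row col σ : ℝ)) ^ 2) ≤ b := by
      rw [hbdef]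
      push_cast
      exact Finset.sum_le_sum_of_subset_of_nonneg (Finset.filter_subset _ _)
        (fun σ _ _ => by positivity)
    have ha : a = ∑ σ : Equiv.Perm (Fin N), ((collCount row col σ : ℝ)) := by
      rw [hadef, ← Nat.cast_sum]
      rw [hS1]
      push_cast
      ring
    rw [ha, ← hsum]
    calc (∑ σ ∈ Z, ((collCount row col σ : ℝ))) ^ 2
        ≤ (Z.card : ℝ) * ∑ σ ∈ Z, ((collCount row col σ : ℝ)) ^ 2 := hcs0
      _ ≤ (Z.card : ℝ) * b := by
          apply mul_le_mul_of_nonneg_left hsub (Nat.cast_nonneg _)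
  have hzK : (Z.card : ℝ) ≤ (N.factorial : ℝ) := by
    have h1 : Z.card ≤ Fintype.card (Equiv.Perm (Fin N)) :=
      le_trans (Finset.card_filter_le _ _) (le_of_eq (Finset.card_univ))
    have h2 : Fintype.card (Equiv.Perm (Fin N)) = N.factorial := by
      rw [Fintype.card_perm, Fintype.card_fin]
    exact_mod_cast h2 ▸ h1
  -- master bound
  have hmaster : (n * (n - 1) * f2) * ((x * 2) * (y * f2)
      + (x * (4 * (r0:ℝ))) * (y * (c0:ℝ) * f3) + (x * x) * (y * y * f4))
      ≤ (1 + ε) * a ^ 2 :=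
    master_real hε0 hε1 hx1 hy1 hn49 hf3 hf4 h2 h3 hxyP hs2 hs0 hs48 hsle hrc
      (Nat.cast_nonneg _) (Nat.cast_nonneg _)
  have hKb : (N.factorial : ℝ) * b ≤ (1 + ε) * a ^ 2 := by
    have hbbound : b ≤ (x * 2) * (y * f2)
        + (x * (4 * (r0:ℝ))) * (y * (c0:ℝ) * f3) + (x * x) * (y * y * f4) := by
      rw [hbdef, hx, hy, hf2def, hf3def, hf4def]
      exact_mod_cast hS2
    calc (N.factorial : ℝ) * b ≤ (N.factorial : ℝ) * ((x * 2) * (y * f2)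
        + (x * (4 * (r0:ℝ))) * (y * (c0:ℝ) * f3) + (x * x) * (y * y * f4)) := by
          apply mul_le_mul_of_nonneg_left hbbound (Nat.cast_nonneg _)
      _ = (n * (n - 1) * f2) * ((x * 2) * (y * f2)
        + (x * (4 * (r0:ℝ))) * (y * (c0:ℝ) * f3) + (x * x) * (y * y * f4)) := by rw [hKf]
      _ ≤ (1 + ε) * a ^ 2 := hmaster
  -- final step
  have ha1 : (1:ℝ) ≤ a := by
    rw [hadef]
    have hf21 : (1:ℝ) ≤ f2 := by
      rw [hf2def]; exact_mod_cast Nat.one_le_iff_ne_zero.mpr (N - 2).factorial_ne_zero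
    have h1 : (1:ℝ) * 1 ≤ y * f2 :=
      mul_le_mul hy1 hf21 zero_le_one (by linarith only [hy1])
    have h2 : (1:ℝ) * 1 ≤ x * (y * f2) :=
      mul_le_mul hx1 (by linarith only [h1]) zero_le_one (by linarith only [hx1])
    linarith only [h2]
  have hbpos : (0:ℝ) < b := by
    rcases lt_or_eq_of_le hb0 with h | h
    · exact h
    · exfalso
      rw [← h, mul_zero] at hCS
      nlinarith only [hCS, ha1]
  have hKpos : (0:ℝ) < (N.factorial : ℝ) := by exact_mod_cast N.factorial_pos
  have hzb : ((N.factorial : ℝ) - Z.card) * b ≤ (ε * (N.factorial : ℝ)) * b := by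
    have h1 : a ^ 2 ≤ (N.factorial : ℝ) * b := by
      calc a ^ 2 ≤ (Z.card : ℝ) * b := hCS
        _ ≤ (N.factorial : ℝ) * b := mul_le_mul_of_nonneg_right hzK hb0
    have h2 : ε * (a ^ 2) ≤ ε * ((N.factorial : ℝ) * b) :=
      mul_le_mul_of_nonneg_left h1 hε0.le
    nlinarith only [hCS, hKb, h2]
  have hfinal : (N.factorial : ℝ) - Z.card ≤ ε * (N.factorial : ℝ) :=
    le_of_mul_le_mul_right hzb hbpos
  have hcard0 : ((univ.filter (fun σ : Equiv.Perm (Fin N) =>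
      collCount row col σ = 0)).card : ℝ) = (N.factorial : ℝ) - Z.card := by
    have := Finset.card_filter_add_card_filter_not
      (s := (univ : Finset (Equiv.Perm (Fin N))))
      (p := fun σ => collCount row col σ = 0)
    rw [Finset.card_univ, Fintype.card_perm, Fintype.card_fin] at this
    rw [hZdef]
    have : (univ.filter (fun σ : Equiv.Perm (Fin N) => collCount row col σ = 0)).card
        + Z.card = N.factorial := by rw [hZdef]; exact this
    have hcast := congrArg (fun k : ℕ => (k : ℝ)) this
    push_cast at hcast
    linarith only [hcast]
  rw [hcard0, div_le_iff₀ hKpos]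
  linarith only [hfinal]


lemma binary_collCount_zero {N : ℕ} {r c : ℕ → ℕ} (row col : Fin N → ℕ)
    (hrow : ∀ i, (univ.filter (fun t => row t = i)).card = r i)
    (hcol : ∀ j, (univ.filter (fun t => col t = j)).card = c j)
    (hrsupp : ∀ i, N ≤ i → r i = 0) (hcsupp : ∀ j, N ≤ j → c j = 0)
    (σ : Equiv.Perm (Fin N))
    (hσ : ∀ i ∈ Finset.range N, ∀ j ∈ Finset.range N,
      (univ.filter (fun t => row t = i ∧ col (σ t) = j)).card ≤ 1) :
    collCount row col σ = 0 := by
  classical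
  rw [collCount, Finset.card_eq_zero, Finset.filter_eq_empty_iff]
  intro p hp hcoll
  obtain ⟨hne, hrr⟩ := mem_samePairs.mp hp
  have hi : row p.1 < N := class_lt hrow hrsupp p.1
  have hj : col (σ p.1) < N := class_lt hcol hcsupp (σ p.1)
  have h2 : ({p.1, p.2} : Finset (Fin N)) ⊆
      univ.filter (fun t => row t = row p.1 ∧ col (σ t) = col (σ p.1)) := by
    intro t ht
    rcases Finset.mem_insert.mp ht with h | h
    · subst h; simp
    · rw [Finset.mem_singleton.mp h]
      simp only [Finset.mem_filter, Finset.mem_univ, true_and]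
      exact ⟨hrr.symm, hcoll.symm⟩
  have hcard2 : ({p.1, p.2} : Finset (Fin N)).card = 2 := by
    rw [Finset.card_insert_of_notMem (by simpa using hne), Finset.card_singleton]
  have := le_trans (le_of_eq hcard2.symm) (Finset.card_le_card h2)
  have := le_trans this (hσ _ (Finset.mem_range.mpr hi) _ (Finset.mem_range.mpr hj))
  omega

theorem liminf_prob_binary_zero_of_not_bigO'
    (r c : ℕ → ℕ → ℕ)
    (hrsupp : ∀ N i, N ≤ i → r N i = 0) (hcsupp : ∀ N j, N ≤ j → c N j = 0)
    (hrmono : ∀ N, ∀ i i', i ≤ i' → r N i' ≤ r N i)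
    (hcmono : ∀ N, ∀ j j', j ≤ j' → c N j' ≤ c N j)
    (hrN : ∀ N, ∑ i ∈ Finset.range N, r N i = N)
    (hcN : ∀ N, ∑ j ∈ Finset.range N, c N j = N)
    (rowOf colOf : (N : ℕ) → Fin N → ℕ)
    (hrow : ∀ N i, (univ.filter (fun t => rowOf N t = i)).card = r N i)
    (hcol : ∀ N j, (univ.filter (fun t => colOf N (t) = j)).card = c N j)
    (hnotO : ¬ ∃ C : ℝ, ∀ N : ℕ,
        (∑ i ∈ Finset.range N, ∑ j ∈ Finset.range N,
          ((r N i * (r N i - 1) * (c N j * (c N j - 1)) : ℕ) : ℝ)) ≤ C * (N : ℝ) ^ 2) :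
    Filter.liminf (probBinary rowOf colOf) Filter.atTop = 0 := by
  classical
  push_neg at hnotO
  -- basic bounds on probBinary
  have hnonneg : ∀ N, 0 ≤ probBinary rowOf colOf N := by
    intro N
    unfold probBinary
    positivity
  have hle1 : ∀ N, probBinary rowOf colOf N ≤ 1 := by
    intro N
    unfold probBinary
    rw [div_le_one (by exact_mod_cast N.factorial_pos : (0:ℝ) < (N.factorial : ℝ))]
    have h1 := Fintype.card_subtype_le (fun σ : Equiv.Perm (Fin N) =>
      ∀ i ∈ Finset.range N, ∀ j ∈ Finset.range N,
        (univ.filter (fun t => rowOf N t = i ∧ colOf N (σ t) = j)).card ≤ 1)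
    have h2 : Fintype.card (Equiv.Perm (Fin N)) = N.factorial := by
      rw [Fintype.card_perm, Fintype.card_fin]
    exact_mod_cast h2 ▸ h1
  have hcard_eq : ∀ N : ℕ, (Fintype.card {σ : Equiv.Perm (Fin N) //
      ∀ i ∈ Finset.range N, ∀ j ∈ Finset.range N,
        (univ.filter (fun t => rowOf N t = i ∧ colOf N (σ t) = j)).card ≤ 1} : ℕ)
      = (univ.filter (fun σ : Equiv.Perm (Fin N) =>
          ∀ i ∈ Finset.range N, ∀ j ∈ Finset.range N,
          (univ.filter (fun t => rowOf N t = i ∧ colOf N (σ t) = j)).card ≤ 1)).card := by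
    intro N
    exact (Fintype.card_congr (Equiv.refl _)).trans (Fintype.card_subtype _)
  -- key upper bound on probBinary along large-μ N
  have hfreq : ∀ ε : ℝ, 0 < ε → ∀ᶠ M in Filter.atTop, ∃ N ≥ M,
      probBinary rowOf colOf N ≤ ε := by
    intro ε hε
    rw [Filter.eventually_atTop]
    refine ⟨0, fun M _ => ?_⟩
    set ε' : ℝ := min ε 1 with hε'def
    have hε'0 : 0 < ε' := lt_min hε zero_lt_one
    have hε'1 : ε' ≤ 1 := min_le_right _ _
    obtain ⟨N, hN⟩ := hnotO (((48 / ε') ^ 2 + 1) + (M : ℝ) ^ 2)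
    -- rewrite the double sum as a product
    have hsum : (∑ i ∈ Finset.range N, ∑ j ∈ Finset.range N,
        ((r N i * (r N i - 1) * (c N j * (c N j - 1)) : ℕ) : ℝ))
        = ((∑ i ∈ Finset.range N, r N i * (r N i - 1) : ℕ) : ℝ)
          * ((∑ j ∈ Finset.range N, c N j * (c N j - 1) : ℕ) : ℝ) := by
      push_cast
      rw [Finset.sum_mul_sum]
    rw [hsum] at hN
    set x : ℝ := ((∑ i ∈ Finset.range N, r N i * (r N i - 1) : ℕ) : ℝ) with hx
    set y : ℝ := ((∑ j ∈ Finset.range N, c N j * (c N j - 1) : ℕ) : ℝ) with hy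
    have hbig : ((48 / ε') ^ 2 + 1) * (N : ℝ) ^ 2 < x * y := by
      have : (0:ℝ) ≤ (M:ℝ) ^ 2 * (N:ℝ) ^ 2 := by positivity
      nlinarith only [hN, this]
    -- N > M
    have hxN : x ≤ ((N : ℝ)) ^ 2 := by
      rw [hx]
      have h1 : (∑ i ∈ Finset.range N, r N i * (r N i - 1)) ≤ N * N := by
        calc (∑ i ∈ Finset.range N, r N i * (r N i - 1))
            ≤ ∑ i ∈ Finset.range N, r N i * N := by
              apply Finset.sum_le_sum
              intro i hi
              refine Nat.mul_le_mul (le_refl _) (le_trans (Nat.sub_le _ _) ?_)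
              calc r N i ≤ ∑ i ∈ Finset.range N, r N i :=
                  Finset.single_le_sum (fun _ _ => Nat.zero_le _) hi
                _ = N := hrN N
          _ = N * N := by rw [← Finset.sum_mul, hrN]
      rw [sq, ← Nat.cast_mul]
      exact_mod_cast h1
    have hyN : y ≤ ((N : ℝ)) ^ 2 := by
      rw [hy]
      have h1 : (∑ j ∈ Finset.range N, c N j * (c N j - 1)) ≤ N * N := by
        calc (∑ j ∈ Finset.range N, c N j * (c N j - 1))
            ≤ ∑ j ∈ Finset.range N, c N j * N := by
              apply Finset.sum_le_sum
              intro j hj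
              refine Nat.mul_le_mul (le_refl _) (le_trans (Nat.sub_le _ _) ?_)
              calc c N j ≤ ∑ j ∈ Finset.range N, c N j :=
                  Finset.single_le_sum (fun _ _ => Nat.zero_le _) hj
                _ = N := hcN N
          _ = N * N := by rw [← Finset.sum_mul, hcN]
      rw [sq, ← Nat.cast_mul]
      exact_mod_cast h1
    have hy0 : (0:ℝ) ≤ y := Nat.cast_nonneg _
    have hMN : M < N := by
      by_contra hMN
      push_neg at hMN
      have hNM : (N:ℝ) ≤ (M:ℝ) := by exact_mod_cast hMN
      have hN0 : (0:ℝ) ≤ (N:ℝ) := Nat.cast_nonneg _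
      have hxy : x * y ≤ (N:ℝ)^2 * (N:ℝ)^2 := mul_le_mul hxN hyN hy0 (sq_nonneg _)
      have hNM2 : (N:ℝ)^2 ≤ (M:ℝ)^2 := by nlinarith only [hNM, hN0]
      have hK0 : (0:ℝ) ≤ (48/ε')^2 + 1 := by positivity
      nlinarith only [hN, hxy, hNM2, hK0, sq_nonneg (N:ℝ)]
    refine ⟨N, le_of_lt hMN, ?_⟩
    -- apply the key bound
    have hkey := key_bound (r N) (c N) (rowOf N) (colOf N) (hrow N) (hcol N)
      (hrsupp N) (hcsupp N) (hrmono N) (hcmono N) (hrN N) (hcN N) hε'0 hε'1 hbig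
    have hprob : probBinary rowOf colOf N ≤
        ((univ.filter (fun σ : Equiv.Perm (Fin N) =>
          collCount (rowOf N) (colOf N) σ = 0)).card : ℝ) / (N.factorial : ℝ) := by
      unfold probBinary
      rw [hcard_eq N]
      have hnum : ((univ.filter (fun σ : Equiv.Perm (Fin N) =>
          ∀ i ∈ Finset.range N, ∀ j ∈ Finset.range N,
          (univ.filter (fun t => rowOf N t = i ∧ colOf N (σ t) = j)).card ≤ 1)).card : ℝ)
          ≤ ((univ.filter (fun σ : Equiv.Perm (Fin N) =>
            collCount (rowOf N) (colOf N) σ = 0)).card : ℝ) := by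
        have hsubset := Finset.monotone_filter_right
          (univ : Finset (Equiv.Perm (Fin N)))
          (p := fun σ => ∀ i ∈ Finset.range N, ∀ j ∈ Finset.range N,
            (univ.filter (fun t => rowOf N t = i ∧ colOf N (σ t) = j)).card ≤ 1)
          (q := fun σ => collCount (rowOf N) (colOf N) σ = 0)
          (fun σ _ hσ => binary_collCount_zero (rowOf N) (colOf N) (hrow N) (hcol N)
            (hrsupp N) (hcsupp N) σ hσ)
        exact_mod_cast Finset.card_le_card hsubset
      exact div_le_div_of_nonneg_right hnum (by positivity)
    calc probBinary rowOf colOf N ≤ _ := hprob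
      _ ≤ ε' := hkey
      _ ≤ ε := min_le_left _ _
  -- conclude about the liminf
  have hbddge : Filter.IsBoundedUnder (· ≥ ·) Filter.atTop (probBinary rowOf colOf) :=
    ⟨0, Filter.eventually_map.mpr (Filter.Eventually.of_forall hnonneg)⟩
  have hliminf_le : ∀ ε : ℝ, 0 < ε →
      Filter.liminf (probBinary rowOf colOf) Filter.atTop ≤ ε := by
    intro ε hε
    apply Filter.liminf_le_of_frequently_le ?_ hbddge
    rw [Filter.frequently_atTop]
    intro M
    obtain ⟨M0, hM0⟩ := Filter.eventually_atTop.mp (hfreq ε hε)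
    obtain ⟨N, hNM, hNle⟩ := hM0 (max M M0) (le_max_right _ _)
    exact ⟨N, le_trans (le_max_left _ _) hNM, hNle⟩
  apply le_antisymm
  · by_contra hlt
    push_neg at hlt
    have := hliminf_le (Filter.liminf (probBinary rowOf colOf) Filter.atTop / 2)
      (by linarith)
    linarith
  · apply Filter.le_liminf_of_le
    · exact Filter.isCoboundedUnder_ge_of_le _ (fun N => hle1 N)
    · exact Filter.Eventually.of_forall hnonneg

end Aux

/-- Proposition 1, necessity: if
`∑_{i,j} r_i(r_i−1)c_j(c_j−1)` is not `O(N²)` (equivalently `limsup μ(N) = ∞`),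
then `liminf P(T ∈ Ω_{r,c}) = 0`. -/
theorem liminf_prob_binary_zero_of_not_bigO
    (r c : ℕ → ℕ → ℕ)
    (hrsupp : ∀ N i, N ≤ i → r N i = 0) (hcsupp : ∀ N j, N ≤ j → c N j = 0)
    (hrmono : ∀ N, ∀ i i', i ≤ i' → r N i' ≤ r N i)
    (hcmono : ∀ N, ∀ j j', j ≤ j' → c N j' ≤ c N j)
    (hrN : ∀ N, ∑ i ∈ Finset.range N, r N i = N)
    (hcN : ∀ N, ∑ j ∈ Finset.range N, c N j = N)
    (rowOf colOf : (N : ℕ) → Fin N → ℕ)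
    (hrow : ∀ N i, (univ.filter (fun t => rowOf N t = i)).card = r N i)
    (hcol : ∀ N j, (univ.filter (fun t => colOf N (t) = j)).card = c N j)
    (hnotO : ¬ ∃ C : ℝ, ∀ N : ℕ,
        (∑ i ∈ Finset.range N, ∑ j ∈ Finset.range N,
          ((r N i * (r N i - 1) * (c N j * (c N j - 1)) : ℕ) : ℝ)) ≤ C * (N : ℝ) ^ 2) :
    Filter.liminf (probBinary rowOf colOf) Filter.atTop = 0 :=
  liminf_prob_binary_zero_of_not_bigO' r c hrsupp hcsupp hrmono hcmono hrN hcN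
    rowOf colOf hrow hcol hnotO
end
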